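/- arXiv:1901.11432 — 4 statements merged into one kernel-verified Lean document; each statement's English description precedes it below -/
import Mathlib

section
/- Let I ⊆ ℝ be a nonempty open interval, let b ∈ (0, ∞], and set D_b = {z ∈ ℂ : 0 < Im z < b} and L = {x + i·0 : x ∈ I}. Let F : D_b ∪ L → ℂ be a continuous function such that the restriction of F to D_b is analytic (complex differentiable). If F vanishes identically on L, then F vanishes identically on D_b ∪ L. -/
open Complex

section Auxiliary

open Set intervalIntegral

lemma hasDerivAt_conj_reflect {f : ℂ → ℂ} {d z : ℂ}
    (h : HasDerivAt f d ((starRingEnd ℂ) z)) :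
    HasDerivAt (fun w => (starRingEnd ℂ) (f ((starRingEnd ℂ) w))) ((starRingEnd ℂ) d) z := by
  have h1 : HasFDerivAt f ((ContinuousLinearMap.smulRight (1 : ℂ →L[ℂ] ℂ) d).restrictScalars ℝ)
      ((starRingEnd ℂ) z) := h.hasFDerivAt.restrictScalars ℝ
  have h2 : ∀ w : ℂ, HasFDerivAt (starRingEnd ℂ)
      ((conjCLE : ℂ ≃L[ℝ] ℂ) : ℂ →L[ℝ] ℂ) w := fun w => conjCLE.hasFDerivAt
  have h3 := (h2 (f ((starRingEnd ℂ) z))).comp z (h1.comp z (h2 z))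
  apply hasFDerivAt_of_restrictScalars ℝ h3
  ext w
  simp [mul_comm]

/-- Morera-type theorem on an open axis-parallel square: if `G` is continuous on the open
square `S` and its integral over the boundary of every rectangle with corners in `S`
vanishes, then `G` is analytic on `S`. -/
lemma analyticOnNhd_of_rect_integral_eq_zero {x0 r : ℝ} (hr : 0 < r) {G : ℂ → ℂ}
    (S : Set ℂ) (hS : S = {z : ℂ | z.re ∈ Ioo (x0 - r) (x0 + r) ∧ z.im ∈ Ioo (-r) r})
    (hGc : ContinuousOn G S)
    (hrect : ∀ p ∈ S, ∀ q ∈ S,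
      (∫ x : ℝ in p.re..q.re, G (x + p.im * I)) - (∫ x : ℝ in p.re..q.re, G (x + q.im * I)) +
        I • (∫ y : ℝ in p.im..q.im, G (q.re + y * I)) -
        I • (∫ y : ℝ in p.im..q.im, G (p.re + y * I)) = 0) :
    AnalyticOnNhd ℂ G S := by
  have hSopen : IsOpen S := by
    rw [hS]
    exact (isOpen_Ioo.preimage continuous_re).inter (isOpen_Ioo.preimage continuous_im)
  -- membership helper
  have hmem : ∀ (x y : ℝ), (x + y * I) ∈ S ↔ (x ∈ Ioo (x0 - r) (x0 + r) ∧ y ∈ Ioo (-r) r) := by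
    intro x y; rw [hS]; simp [mem_setOf_eq]
  have hmem' : ∀ z ∈ S, z.re ∈ Ioo (x0 - r) (x0 + r) ∧ z.im ∈ Ioo (-r) r := by
    intro z hz; rw [hS] at hz; exact hz
  -- horizontal and vertical segments lie in S
  have hseg : ∀ {x1 x2 y : ℝ}, x1 ∈ Ioo (x0 - r) (x0 + r) → x2 ∈ Ioo (x0 - r) (x0 + r) →
      y ∈ Ioo (-r) r → ∀ t ∈ uIcc x1 x2, (t + y * I) ∈ S := by
    intro x1 x2 y h1 h2 hy t ht
    refine (hmem t y).2 ⟨?_, hy⟩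
    rcases mem_uIcc.1 ht with h | h
    · exact ⟨lt_of_lt_of_le h1.1 h.1, lt_of_le_of_lt h.2 h2.2⟩
    · exact ⟨lt_of_lt_of_le h2.1 h.1, lt_of_le_of_lt h.2 h1.2⟩
  have hvseg : ∀ {x y1 y2 : ℝ}, x ∈ Ioo (x0 - r) (x0 + r) → y1 ∈ Ioo (-r) r →
      y2 ∈ Ioo (-r) r → ∀ t ∈ uIcc y1 y2, (x + t * I) ∈ S := by
    intro x y1 y2 hx h1 h2 t ht
    refine (hmem x t).2 ⟨hx, ?_⟩
    rcases mem_uIcc.1 ht with h | h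
    · exact ⟨lt_of_lt_of_le h1.1 h.1, lt_of_le_of_lt h.2 h2.2⟩
    · exact ⟨lt_of_lt_of_le h2.1 h.1, lt_of_le_of_lt h.2 h1.2⟩
  -- interval integrability helpers
  have hIntH : ∀ {x1 x2 y : ℝ}, x1 ∈ Ioo (x0 - r) (x0 + r) → x2 ∈ Ioo (x0 - r) (x0 + r) →
      y ∈ Ioo (-r) r → IntervalIntegrable (fun t : ℝ => G (t + y * I)) MeasureTheory.volume x1 x2 := by
    intro x1 x2 y h1 h2 hy
    apply ContinuousOn.intervalIntegrable
    exact hGc.comp ((continuous_ofReal.add continuous_const).continuousOn)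
      (fun t ht => hseg h1 h2 hy t ht)
  have hIntV : ∀ {x y1 y2 : ℝ}, x ∈ Ioo (x0 - r) (x0 + r) → y1 ∈ Ioo (-r) r →
      y2 ∈ Ioo (-r) r → IntervalIntegrable (fun t : ℝ => G (x + t * I)) MeasureTheory.volume y1 y2 := by
    intro x y1 y2 hx h1 h2
    apply ContinuousOn.intervalIntegrable
    refine hGc.comp ?_ (fun t ht => hvseg hx h1 h2 t ht)
    exact (continuous_const.add (continuous_ofReal.mul continuous_const)).continuousOn
  have h0r : (0 : ℝ) ∈ Ioo (-r) r := ⟨neg_lt_zero.2 hr, hr⟩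
  -- the primitive
  set H : ℂ → ℂ := fun z =>
    (∫ t : ℝ in x0..z.re, G (t + (0:ℝ) * I)) + I • (∫ s : ℝ in (0:ℝ)..z.im, G (z.re + s * I))
    with hHdef
  have hx0 : x0 ∈ Ioo (x0 - r) (x0 + r) := by constructor <;> linarith
  -- key difference identity
  have key : ∀ z ∈ S, ∀ w ∈ S, H w - H z =
      (∫ t : ℝ in z.re..w.re, G (t + z.im * I)) + I • (∫ s : ℝ in z.im..w.im, G (w.re + s * I)) := by
    intro z hz w hw
    obtain ⟨hzre, hzim⟩ := hmem' z hz
    obtain ⟨hwre, hwim⟩ := hmem' w hw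
    have hp : ((z.re : ℂ) + (0:ℝ) * I) ∈ S := (hmem _ _).2 ⟨hzre, h0r⟩
    have hq : ((w.re : ℂ) + (z.im : ℝ) * I) ∈ S := (hmem _ _).2 ⟨hwre, hzim⟩
    have hR : (∫ x : ℝ in z.re..w.re, G (x + (0:ℝ) * I)) -
        (∫ x : ℝ in z.re..w.re, G (x + z.im * I)) +
        I • (∫ y : ℝ in (0:ℝ)..z.im, G (w.re + y * I)) -
        I • (∫ y : ℝ in (0:ℝ)..z.im, G (z.re + y * I)) = 0 := by
      have := hrect _ hp _ hq
      simpa using this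
    have hsub : (∫ t : ℝ in x0..w.re, G (t + (0:ℝ) * I)) -
        (∫ t : ℝ in x0..z.re, G (t + (0:ℝ) * I)) = ∫ t : ℝ in z.re..w.re, G (t + (0:ℝ) * I) :=
      integral_interval_sub_left (hIntH hx0 hwre h0r) (hIntH hx0 hzre h0r)
    have hadd : (∫ s : ℝ in (0:ℝ)..z.im, G (w.re + s * I)) +
        (∫ s : ℝ in z.im..w.im, G (w.re + s * I)) = ∫ s : ℝ in (0:ℝ)..w.im, G (w.re + s * I) :=
      integral_add_adjacent_intervals (hIntV hwre h0r hzim) (hIntV hwre hzim hwim)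
    simp only [hHdef, smul_eq_mul] at hR ⊢
    linear_combination hsub - I * hadd + hR
  -- H has derivative G z at every z ∈ S
  have hder : ∀ z ∈ S, HasDerivAt H (G z) z := by
    intro z hz
    rw [hasDerivAt_iff_isLittleO]
    rw [Asymptotics.isLittleO_iff]
    intro ε hε
    have hGz : ContinuousAt G z := hGc.continuousAt (hSopen.mem_nhds hz)
    rcases Metric.continuousAt_iff.1 hGz (ε/2) (by positivity) with ⟨δ₀, hδ₀, hδ⟩
    rcases Metric.isOpen_iff.1 hSopen z hz with ⟨δ₁, hδ₁, hball⟩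
    have hδm : 0 < min δ₀ δ₁ / 2 := by positivity
    have habs : ∀ {a b t : ℝ}, t ∈ uIcc a b → |t - a| ≤ |b - a| := by
      intro a b t ht
      rw [Set.mem_uIcc] at ht
      have hb1 := le_abs_self (b - a)
      have hb2 := neg_abs_le (b - a)
      rcases ht with ⟨h1, h2⟩ | ⟨h1, h2⟩ <;> rw [abs_sub_le_iff] <;>
        exact ⟨by linarith, by linarith⟩
    filter_upwards [Metric.ball_mem_nhds z hδm] with w hw
    have hdist : dist w z < min δ₀ δ₁ / 2 := hw
    have hwS : w ∈ S := hball (by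
      refine Metric.mem_ball.2 (lt_of_lt_of_le hdist ?_)
      calc min δ₀ δ₁ / 2 ≤ δ₁ / 2 := by
            have := min_le_right δ₀ δ₁; linarith
        _ ≤ δ₁ := by linarith)
    obtain ⟨hzre, hzim⟩ := hmem' z hz
    obtain ⟨hwre, hwim⟩ := hmem' w hwS
    have hkey := key z hz w hwS
    have hre_le : |w.re - z.re| ≤ dist w z := by
      have := Complex.abs_re_le_norm (w - z)
      simpa [Complex.dist_eq, Complex.sub_re] using this
    have him_le : |w.im - z.im| ≤ dist w z := by
      have := Complex.abs_im_le_norm (w - z)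
      simpa [Complex.dist_eq, Complex.sub_im] using this
    -- pointwise bounds on the two segments
    have hbound1 : ∀ t ∈ Set.uIoc z.re w.re, ‖G (t + z.im * I) - G z‖ ≤ ε / 2 := by
      intro t ht
      have ht' : t ∈ uIcc z.re w.re := Set.uIoc_subset_uIcc ht
      have hd : dist (↑t + ↑z.im * I) z < δ₀ := by
        have h1 : dist (↑t + ↑z.im * I) z = |t - z.re| := by
          rw [Complex.dist_eq]
          have : (↑t + ↑z.im * I) - z = ((t - z.re : ℝ) : ℂ) := by
            have := re_add_im z
            push_cast
            linear_combination this
          rw [this, Complex.norm_real, Real.norm_eq_abs]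
        rw [h1]
        have h2 : |t - z.re| ≤ |w.re - z.re| := habs ht'
        have h3 := min_le_left δ₀ δ₁
        calc |t - z.re| ≤ dist w z := le_trans h2 hre_le
          _ < min δ₀ δ₁ / 2 := hdist
          _ < δ₀ := by linarith
      exact le_of_lt (by simpa [dist_eq_norm] using hδ hd)
    have hbound2 : ∀ s ∈ Set.uIoc z.im w.im, ‖G (↑w.re + ↑s * I) - G z‖ ≤ ε / 2 := by
      intro s hs
      have hs' : s ∈ uIcc z.im w.im := Set.uIoc_subset_uIcc hs
      have hd : dist (↑w.re + ↑s * I) z < δ₀ := by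
        have h1 : (↑w.re + ↑s * I) - z = ((w.re - z.re : ℝ) : ℂ) + ((s - z.im : ℝ) : ℂ) * I := by
          have := re_add_im z
          push_cast
          linear_combination this
        have h2 : dist (↑w.re + ↑s * I) z ≤ |w.re - z.re| + |s - z.im| := by
          rw [Complex.dist_eq, h1]
          refine le_trans (norm_add_le _ _) ?_
          simp [← Complex.ofReal_sub, Complex.norm_real, Complex.norm_I]
        have h3 : |s - z.im| ≤ |w.im - z.im| := habs hs'
        have h4 := min_le_left δ₀ δ₁
        calc dist (↑w.re + ↑s * I) z ≤ |w.re - z.re| + |s - z.im| := h2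
          _ ≤ dist w z + dist w z := add_le_add hre_le (le_trans h3 him_le)
          _ < min δ₀ δ₁ / 2 + min δ₀ δ₁ / 2 := by linarith
          _ ≤ δ₀ := by linarith
      exact le_of_lt (by simpa [dist_eq_norm] using hδ hd)
    -- rewrite the difference
    set A := ∫ t : ℝ in z.re..w.re, (G (↑t + ↑z.im * I) - G z) with hA
    set B := ∫ s : ℝ in z.im..w.im, (G (↑w.re + ↑s * I) - G z) with hB
    have eA : A = (∫ t : ℝ in z.re..w.re, G (↑t + ↑z.im * I)) - (w.re - z.re) • G z := by
      rw [hA, intervalIntegral.integral_sub (hIntH hzre hwre hzim) intervalIntegrable_const,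
        intervalIntegral.integral_const]
    have eB : B = (∫ s : ℝ in z.im..w.im, G (↑w.re + ↑s * I)) - (w.im - z.im) • G z := by
      rw [hB, intervalIntegral.integral_sub (hIntV hwre hzim hwim) intervalIntegrable_const,
        intervalIntegral.integral_const]
    have hsplit : H w - H z - (w - z) • G z = A + I • B := by
      rw [eA, eB]
      have h1 : H w - H z =
          (∫ t : ℝ in z.re..w.re, G (↑t + ↑z.im * I)) +
            I • (∫ s : ℝ in z.im..w.im, G (↑w.re + ↑s * I)) := hkey
      simp only [smul_eq_mul, real_smul, ofReal_sub] at h1 ⊢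
      have hzri := re_add_im z
      have hwri := re_add_im w
      linear_combination h1 - G z * hzri + G z * hwri
    rw [hsplit]
    have hnA : ‖A‖ ≤ ε / 2 * |w.re - z.re| := by
      have := intervalIntegral.norm_integral_le_of_norm_le_const hbound1
      simpa using this
    have hnB : ‖B‖ ≤ ε / 2 * |w.im - z.im| := by
      have := intervalIntegral.norm_integral_le_of_norm_le_const hbound2
      simpa using this
    have hnIB : ‖I • B‖ = ‖B‖ := by
      simp [norm_smul]
    calc ‖A + I • B‖ ≤ ‖A‖ + ‖I • B‖ := norm_add_le _ _
      _ = ‖A‖ + ‖B‖ := by rw [hnIB]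
      _ ≤ ε / 2 * |w.re - z.re| + ε / 2 * |w.im - z.im| := add_le_add hnA hnB
      _ ≤ ε / 2 * ‖w - z‖ + ε / 2 * ‖w - z‖ := by
          have h1 : |w.re - z.re| ≤ ‖w - z‖ := by
            simpa [Complex.dist_eq, dist_eq_norm, Complex.sub_re] using hre_le
          have h2 : |w.im - z.im| ≤ ‖w - z‖ := by
            simpa [Complex.dist_eq, dist_eq_norm, Complex.sub_im] using him_le
          have hε2 : (0:ℝ) ≤ ε / 2 := by positivity
          exact add_le_add (mul_le_mul_of_nonneg_left h1 hε2)
            (mul_le_mul_of_nonneg_left h2 hε2)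
      _ = ε * ‖w - z‖ := by ring
  -- conclude
  have hHdiff : DifferentiableOn ℂ H S := fun z hz =>
    (hder z hz).differentiableAt.differentiableWithinAt
  have hHanal : AnalyticOnNhd ℂ H S := hHdiff.analyticOnNhd hSopen
  have hderiv : AnalyticOnNhd ℂ (deriv H) S := hHanal.deriv
  refine hderiv.congr hSopen ?_
  intro z hz
  exact (hder z hz).deriv

end Auxiliary

open Set intervalIntegral in
/-- **Uniqueness from boundary vanishing on a strip.**
Let `I = (a, c)` be a nonempty open interval, `b ∈ (0, ∞]`, and let
`D_b = {z : 0 < Im z < b}` and `L = {x + i·0 : x ∈ I}`. If `F` is continuous on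
`D_b ∪ L`, analytic on `D_b`, and vanishes identically on `L`, then `F ≡ 0` on `D_b ∪ L`. -/
theorem strip_vanishing_on_boundary_interval
    (a c : ℝ) (hac : a < c) (b : ENNReal) (hb : 0 < b)
    (D L : Set ℂ)
    (hD : D = {z : ℂ | 0 < z.im ∧ ENNReal.ofReal z.im < b})
    (hL : L = {z : ℂ | z.im = 0 ∧ z.re ∈ Set.Ioo a c})
    (F : ℂ → ℂ)
    (hF_cont : ContinuousOn F (D ∪ L))
    (hF_anal : DifferentiableOn ℂ F D)
    (hF_zero : ∀ z ∈ L, F z = 0) :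
    ∀ z ∈ D ∪ L, F z = 0 := by
  classical
  set x0 : ℝ := (a + c) / 2 with hx0def
  set b' : ℝ := if hbt : b = ⊤ then 1 else b.toReal with hb'def
  have hb' : 0 < b' := by
    rw [hb'def]
    split_ifs with h
    · norm_num
    · exact ENNReal.toReal_pos hb.ne' h
  set r : ℝ := min ((c - a) / 2) b' with hrdef
  have hr : 0 < r := lt_min (by linarith) hb'
  have hr1 : r ≤ (c - a) / 2 := min_le_left _ _
  have hr2 : r ≤ b' := min_le_right _ _
  set S : Set ℂ := {z : ℂ | z.re ∈ Ioo (x0 - r) (x0 + r) ∧ z.im ∈ Ioo (-r) r} with hSdef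
  have hDopen : IsOpen D := by
    rw [hD]
    have : {z : ℂ | 0 < z.im ∧ ENNReal.ofReal z.im < b} =
        im ⁻¹' (Ioi 0) ∩ (fun z : ℂ => ENNReal.ofReal z.im) ⁻¹' (Iio b) := rfl
    rw [this]
    exact (isOpen_Ioi.preimage continuous_im).inter
      ((isOpen_Iio.preimage ENNReal.continuous_ofReal).preimage continuous_im)
  -- upper part of S sits in D ∪ L
  have hSD : ∀ z ∈ S, 0 < z.im → z ∈ D := by
    intro z hz hzim
    rw [hD]
    refine ⟨hzim, ?_⟩
    have him : z.im < r := hz.2.2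
    by_cases hbt : b = ⊤
    · simp [hbt]
    · have hb'' : b' = b.toReal := by rw [hb'def]; simp [hbt]
      rw [ENNReal.ofReal_lt_iff_lt_toReal hzim.le hbt]
      rw [hb''] at hr2
      linarith
  have hSL : ∀ z ∈ S, z.im = 0 → z ∈ L := by
    intro z hz hzim
    rw [hL]
    refine ⟨hzim, ?_, ?_⟩
    · have h1 := hz.1.1
      have h2 : x0 = (a + c) / 2 := hx0def
      linarith
    · have h1 := hz.1.2
      have h2 : x0 = (a + c) / 2 := hx0def
      linarith
  have hSDL : ∀ z ∈ S, 0 ≤ z.im → z ∈ D ∪ L := by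
    intro z hz h
    rcases lt_or_eq_of_le h with h | h
    · exact Or.inl (hSD z hz h)
    · exact Or.inr (hSL z hz h.symm)
  -- the reflected function
  set G : ℂ → ℂ := fun z => if 0 ≤ z.im then F z else (starRingEnd ℂ) (F ((starRingEnd ℂ) z))
    with hGdef
  have hG_upper : ∀ z : ℂ, 0 ≤ z.im → G z = F z := by
    intro z h; rw [hGdef]; simp [h]
  have hG_lower : ∀ z ∈ S, z.im ≤ 0 → G z = (starRingEnd ℂ) (F ((starRingEnd ℂ) z)) := by
    intro z hz h
    rcases lt_or_eq_of_le h with h | h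
    · rw [hGdef]; simp [not_le.2 h]
    · have hzL : z ∈ L := hSL z hz h
      have h1 : (starRingEnd ℂ) z = z := by
        rw [Complex.ext_iff]; simp [h]
      rw [hG_upper z h.ge, h1, hF_zero z hzL]
      simp
  -- conj maps S to S
  have hSconj : ∀ z ∈ S, (starRingEnd ℂ) z ∈ S := by
    intro z hz
    refine ⟨by simpa using hz.1, ?_⟩
    have := hz.2
    simp only [conj_im]
    constructor
    · simpa using neg_lt_neg this.2
    · have := this.1; linarith [neg_lt_neg this]
  have hSopen : IsOpen S := by
    rw [hSdef]
    exact (isOpen_Ioo.preimage continuous_re).inter (isOpen_Ioo.preimage continuous_im)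
  -- continuity of G on S
  have hGc : ContinuousOn G S := by
    intro z hz
    rcases lt_trichotomy z.im 0 with h | h | h
    · -- below the axis
      have hzD : (starRingEnd ℂ) z ∈ D := hSD _ (hSconj z hz) (by simpa using neg_pos.2 h)
      have hFc : ContinuousAt F ((starRingEnd ℂ) z) :=
        (hF_cont _ (Or.inl hzD)).continuousAt
          (Filter.mem_of_superset (hDopen.mem_nhds hzD) subset_union_left)
      have hcc : ContinuousAt (fun w => (starRingEnd ℂ) (F ((starRingEnd ℂ) w))) z :=
        continuous_conj.continuousAt.comp (hFc.comp continuous_conj.continuousAt)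
      have hev : G =ᶠ[nhds z] (fun w => (starRingEnd ℂ) (F ((starRingEnd ℂ) w))) := by
        filter_upwards [(isOpen_lt continuous_im continuous_const).mem_nhds
          (show z.im < 0 from h)] with w hw
        rw [hGdef]; simp [not_le.2 hw]
      exact ((hcc.congr hev.symm)).continuousWithinAt
    · -- on the axis
      have hzL : z ∈ L := hSL z hz h
      have hFz : F z = 0 := hF_zero z hzL
      have hGz : G z = 0 := by rw [hG_upper z h.ge, hFz]
      rw [ContinuousWithinAt, hGz]
      have hcover : S ⊆ (S ∩ {w : ℂ | 0 ≤ w.im}) ∪ (S ∩ {w : ℂ | w.im ≤ 0}) := by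
        intro w hw
        rcases le_total 0 w.im with h' | h'
        · exact Or.inl ⟨hw, h'⟩
        · exact Or.inr ⟨hw, h'⟩
      have hle : nhdsWithin z S ≤
          nhdsWithin z ((S ∩ {w : ℂ | 0 ≤ w.im}) ∪ (S ∩ {w : ℂ | w.im ≤ 0})) :=
        nhdsWithin_mono z hcover
      refine Filter.Tendsto.mono_left ?_ hle
      rw [nhdsWithin_union]
      refine Filter.Tendsto.sup ?_ ?_
      · -- upper part
        have h1 : ContinuousWithinAt F (S ∩ {w : ℂ | 0 ≤ w.im}) z :=
          (hF_cont z (Or.inr hzL)).mono (fun w hw => hSDL w hw.1 hw.2)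
        rw [ContinuousWithinAt, hFz] at h1
        refine h1.congr' ?_
        filter_upwards [self_mem_nhdsWithin] with w hw
        exact (hG_upper w hw.2).symm
      · -- lower part
        have hconjmap : MapsTo (starRingEnd ℂ) (S ∩ {w : ℂ | w.im ≤ 0}) (D ∪ L) := by
          intro w hw
          refine hSDL _ (hSconj w hw.1) ?_
          simp only [conj_im]
          have h2 : w.im ≤ 0 := hw.2
          linarith
        have hcz : (starRingEnd ℂ) z = z := by rw [Complex.ext_iff]; simp [h]
        have h1 : ContinuousWithinAt (fun w => (starRingEnd ℂ) (F ((starRingEnd ℂ) w)))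
            (S ∩ {w : ℂ | w.im ≤ 0}) z := by
          refine ContinuousAt.comp_continuousWithinAt continuous_conj.continuousAt ?_
          refine ContinuousWithinAt.comp ?_ continuous_conj.continuousWithinAt hconjmap
          rw [hcz]
          exact hF_cont z (Or.inr hzL)
        rw [ContinuousWithinAt] at h1
        rw [hcz, hFz] at h1
        simp only [map_zero] at h1
        refine h1.congr' ?_
        filter_upwards [self_mem_nhdsWithin] with w hw
        exact (hG_lower w hw.1 hw.2).symm
    · -- above the axis
      have hzD : z ∈ D := hSD z hz h
      have hFc : ContinuousAt F z :=
        (hF_cont _ (Or.inl hzD)).continuousAt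
          (Filter.mem_of_superset (hDopen.mem_nhds hzD) subset_union_left)
      have hev : G =ᶠ[nhds z] F := by
        filter_upwards [(isOpen_lt continuous_const continuous_im).mem_nhds
          (show 0 < z.im from h)] with w hw
        exact hG_upper w (le_of_lt hw)
      exact ((hFc.congr hev.symm)).continuousWithinAt
  -- generic uIcc helper
  have huIcc : ∀ {lo hi α β t : ℝ}, α ∈ Ioo lo hi → β ∈ Ioo lo hi → t ∈ uIcc α β →
      t ∈ Ioo lo hi := by
    intro lo hi α β t h1 h2 ht
    rcases mem_uIcc.1 ht with h | h
    · exact ⟨lt_of_lt_of_le h1.1 h.1, lt_of_le_of_lt h.2 h2.2⟩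
    · exact ⟨lt_of_lt_of_le h2.1 h.1, lt_of_le_of_lt h.2 h1.2⟩
  have hIooIcc : ∀ (α β : ℝ), Ioo (min α β) (max α β) ⊆ uIcc α β := by
    intro α β
    rw [Set.uIcc]
    exact Set.Ioo_subset_Icc_self
  have h0r : (0 : ℝ) ∈ Ioo (-r) r := ⟨neg_lt_zero.2 hr, hr⟩
  -- vertical interval integrability
  have hIntV : ∀ {x y1 y2 : ℝ}, x ∈ Ioo (x0 - r) (x0 + r) → y1 ∈ Ioo (-r) r →
      y2 ∈ Ioo (-r) r →
      IntervalIntegrable (fun t : ℝ => G (x + t * I)) MeasureTheory.volume y1 y2 := by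
    intro x y1 y2 hx h1 h2
    apply ContinuousOn.intervalIntegrable
    refine hGc.comp ?_ (fun t ht => ?_)
    · exact (continuous_const.add (continuous_ofReal.mul continuous_const)).continuousOn
    · refine ⟨by simpa using hx, by simpa using huIcc h1 h2 ht⟩
  -- half-rectangle vanishing
  have hhalf : ∀ x1 ∈ Ioo (x0 - r) (x0 + r), ∀ x2 ∈ Ioo (x0 - r) (x0 + r),
      ∀ t ∈ Ioo (-r) r,
      (∫ x : ℝ in x1..x2, G (x + t * I)) - (∫ x : ℝ in x1..x2, G (x + (0:ℝ) * I)) +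
        I • (∫ y : ℝ in t..(0:ℝ), G (x2 + y * I)) -
        I • (∫ y : ℝ in t..(0:ℝ), G (x1 + y * I)) = 0 := by
    intro x1 hx1 x2 hx2 t ht
    have h := integral_boundary_rect_eq_zero_of_differentiable_on_off_countable G
      ((x1 : ℂ) + t * I) ((x2 : ℂ) + (0:ℝ) * I) ∅ countable_empty ?_ ?_
    · simpa using h
    · -- continuity on closed rectangle
      refine hGc.mono ?_
      intro ζ hζ
      rw [Complex.mem_reProdIm] at hζ
      obtain ⟨h1, h2⟩ := hζ
      simp only [add_re, ofReal_re, mul_re, ofReal_im, I_re, I_im, mul_im, add_im] at h1 h2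
      constructor
      · refine huIcc hx1 hx2 ?_
        convert h1 using 2 <;> ring
      · refine huIcc ht h0r ?_
        convert h2 using 2 <;> ring
    · -- differentiability inside
      intro x hx
      obtain ⟨hx1', hx2'⟩ := Complex.mem_reProdIm.1 hx.1
      simp only [add_re, ofReal_re, mul_re, ofReal_im, I_re, I_im, mul_im, add_im] at hx1' hx2'
      have hxre : x.re ∈ Ioo (x0 - r) (x0 + r) := by
        refine huIcc hx1 hx2 (hIooIcc _ _ ?_)
        convert hx1' using 3 <;> ring
      have hxim : x.im ∈ Ioo (min t 0) (max t 0) := by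
        convert hx2' using 3 <;> ring
      have hxS : x ∈ S := ⟨hxre, huIcc ht h0r (hIooIcc _ _ hxim)⟩
      rcases le_or_gt 0 t with ht0 | ht0
      · -- upper rectangle
        have him : 0 < x.im := lt_of_le_of_lt (le_min ht0 le_rfl) hxim.1
        have hxD : x ∈ D := hSD x hxS him
        have hdF : DifferentiableAt ℂ F x := hF_anal.differentiableAt (hDopen.mem_nhds hxD)
        refine hdF.congr_of_eventuallyEq ?_
        filter_upwards [(isOpen_lt continuous_const continuous_im).mem_nhds
          (show 0 < x.im from him)] with w hw
        exact hG_upper w (le_of_lt hw)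
      · -- lower rectangle
        have him : x.im < 0 := lt_of_lt_of_le hxim.2 (max_le ht0.le le_rfl)
        have hxD : (starRingEnd ℂ) x ∈ D := hSD _ (hSconj x hxS) (by simpa using neg_pos.2 him)
        have hdF : DifferentiableAt ℂ F ((starRingEnd ℂ) x) :=
          hF_anal.differentiableAt (hDopen.mem_nhds hxD)
        have hder := hasDerivAt_conj_reflect hdF.hasDerivAt
        refine hder.differentiableAt.congr_of_eventuallyEq ?_
        filter_upwards [(isOpen_lt continuous_im continuous_const).mem_nhds
          (show x.im < 0 from him)] with w hw
        rw [hGdef]; simp [not_le.2 (show w.im < 0 from hw)]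
  -- full rectangle vanishing
  have hrect : ∀ p ∈ S, ∀ q ∈ S,
      (∫ x : ℝ in p.re..q.re, G (x + p.im * I)) -
        (∫ x : ℝ in p.re..q.re, G (x + q.im * I)) +
        I • (∫ y : ℝ in p.im..q.im, G (q.re + y * I)) -
        I • (∫ y : ℝ in p.im..q.im, G (p.re + y * I)) = 0 := by
    intro p hp q hq
    obtain ⟨hpre, hpim⟩ := hp
    obtain ⟨hqre, hqim⟩ := hq
    have hv1 : (∫ y : ℝ in p.im..(0:ℝ), G (q.re + y * I)) +
        (∫ y : ℝ in (0:ℝ)..q.im, G (q.re + y * I)) =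
        ∫ y : ℝ in p.im..q.im, G (q.re + y * I) :=
      integral_add_adjacent_intervals (hIntV hqre hpim h0r) (hIntV hqre h0r hqim)
    have hv2 : (∫ y : ℝ in p.im..(0:ℝ), G (p.re + y * I)) +
        (∫ y : ℝ in (0:ℝ)..q.im, G (p.re + y * I)) =
        ∫ y : ℝ in p.im..q.im, G (p.re + y * I) :=
      integral_add_adjacent_intervals (hIntV hpre hpim h0r) (hIntV hpre h0r hqim)
    have h1 := hhalf p.re hpre q.re hqre p.im hpim
    have h2 := hhalf p.re hpre q.re hqre q.im hqim
    have hs1 : (∫ y : ℝ in q.im..(0:ℝ), G (q.re + y * I)) =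
        -∫ y : ℝ in (0:ℝ)..q.im, G (q.re + y * I) := integral_symm _ _
    have hs2 : (∫ y : ℝ in q.im..(0:ℝ), G (p.re + y * I)) =
        -∫ y : ℝ in (0:ℝ)..q.im, G (p.re + y * I) := integral_symm _ _
    rw [hs1, hs2] at h2
    simp only [smul_eq_mul] at h1 h2 ⊢
    linear_combination h1 - h2 - I * hv1 + I * hv2
  -- G is analytic on S
  have hGanal : AnalyticOnNhd ℂ G S := analyticOnNhd_of_rect_integral_eq_zero hr S hSdef hGc hrect
  -- S is preconnected
  have hSconv : Convex ℝ S := by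
    intro p hp q hq α β hα hβ hαβ
    have h1 := (convex_Ioo (x0 - r) (x0 + r)) hp.1 hq.1 hα hβ hαβ
    have h2 := (convex_Ioo (-r) r) hp.2 hq.2 hα hβ hαβ
    constructor
    · simpa [Complex.add_re, Complex.real_smul, smul_eq_mul] using h1
    · simpa [Complex.add_im, Complex.real_smul, smul_eq_mul] using h2
  have hSpre : IsPreconnected S := hSconv.isPreconnected
  -- G vanishes frequently near x0
  have hx0S : ((x0 : ℝ) : ℂ) ∈ S := by
    constructor
    · simp only [ofReal_re]
      constructor <;> linarith
    · simp only [ofReal_im]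
      exact h0r
  have hu : ∀ n : ℕ, G (((x0 + r / 2 * (1 / (n + 1)) : ℝ) : ℂ)) = 0 := by
    intro n
    have hpos : 0 < r / 2 * (1 / ((n : ℝ) + 1)) := by positivity
    have hle : r / 2 * (1 / ((n : ℝ) + 1)) ≤ r / 2 := by
      rw [mul_one_div]
      rw [div_le_iff₀ (by positivity)]
      have : (1 : ℝ) ≤ (n : ℝ) + 1 := by
        have := Nat.cast_nonneg (α := ℝ) n; linarith
      nlinarith [hr]
    have hmem : (((x0 + r / 2 * (1 / (n + 1)) : ℝ) : ℂ)) ∈ L := by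
      rw [hL]
      refine ⟨by simp, ?_, ?_⟩
      · simp only [ofReal_re]
        have h2 : x0 = (a + c) / 2 := hx0def
        linarith
      · simp only [ofReal_re]
        have h2 : x0 = (a + c) / 2 := hx0def
        linarith
    rw [hG_upper _ (by simp)]
    exact hF_zero _ hmem
  have htend : Filter.Tendsto (fun n : ℕ => (((x0 + r / 2 * (1 / (n + 1)) : ℝ) : ℂ)))
      Filter.atTop (nhdsWithin ((x0 : ℝ) : ℂ) {((x0 : ℝ) : ℂ)}ᶜ) := by
    rw [tendsto_nhdsWithin_iff]
    constructor
    · have h1 : Filter.Tendsto (fun n : ℕ => (x0 + r / 2 * (1 / (n + 1)) : ℝ))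
          Filter.atTop (nhds x0) := by
        have h2 : Filter.Tendsto (fun n : ℕ => r / 2 * (1 / ((n : ℝ) + 1)))
            Filter.atTop (nhds 0) := by
          have := tendsto_one_div_add_atTop_nhds_zero_nat (𝕜 := ℝ)
          simpa using this.const_mul (r / 2)
        have := h2.const_add x0
        simpa using this
      exact (Complex.continuous_ofReal.tendsto x0).comp h1
    · refine Filter.Eventually.of_forall (fun n => ?_)
      simp only [Set.mem_compl_iff, Set.mem_singleton_iff]
      intro hEq
      have := congrArg Complex.re hEq
      simp only [ofReal_re] at this
      have hpos : 0 < r / 2 * (1 / ((n : ℝ) + 1)) := by positivity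
      linarith
  have hfreq : ∃ᶠ z in nhdsWithin ((x0 : ℝ) : ℂ) {((x0 : ℝ) : ℂ)}ᶜ, G z = 0 :=
    htend.frequently (Filter.Frequently.of_forall hu)
  have hGzero : Set.EqOn G 0 S :=
    hGanal.eqOn_zero_of_preconnected_of_frequently_eq_zero hSpre hx0S hfreq
  -- F vanishes near z1
  set z1 : ℂ := ((x0 : ℝ) : ℂ) + (r / 2 : ℝ) * I with hz1def
  have hz1re : z1.re = x0 := by rw [hz1def]; simp
  have hz1im : z1.im = r / 2 := by rw [hz1def]; simp
  have hz1S : z1 ∈ S := by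
    constructor
    · rw [hz1re]; constructor <;> linarith
    · rw [hz1im]; constructor <;> linarith
  have hz1D : z1 ∈ D := hSD z1 hz1S (by rw [hz1im]; positivity)
  have hFev : F =ᶠ[nhds z1] 0 := by
    filter_upwards [(hSopen.inter (isOpen_lt continuous_const continuous_im)).mem_nhds
      ⟨hz1S, by rw [Set.mem_setOf_eq, hz1im]; positivity⟩] with w hw
    have h1 : G w = F w := hG_upper w (le_of_lt hw.2)
    have h2 : G w = 0 := hGzero hw.1
    rw [← h1, h2]; rfl
  -- D is preconnected
  have hDconv : Convex ℝ D := by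
    intro p hp q hq α β hα hβ hαβ
    rw [hD] at hp hq ⊢
    have him : (α • p + β • q).im = α * p.im + β * q.im := by
      simp [Complex.add_im, Complex.real_smul]
    constructor
    · rw [him]
      have hm : 0 < min p.im q.im := lt_min hp.1 hq.1
      nlinarith [mul_le_mul_of_nonneg_left (min_le_left p.im q.im) hα,
        mul_le_mul_of_nonneg_left (min_le_right p.im q.im) hβ]
    · rw [him]
      rcases le_total p.im q.im with h | h
      · have hle : α * p.im + β * q.im ≤ q.im := by
          have h2 : (α + β) * q.im = q.im := by rw [hαβ, one_mul]
          nlinarith [mul_le_mul_of_nonneg_left h hα]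
        exact lt_of_le_of_lt (ENNReal.ofReal_le_ofReal hle) hq.2
      · have hle : α * p.im + β * q.im ≤ p.im := by
          have h2 : (α + β) * p.im = p.im := by rw [hαβ, one_mul]
          nlinarith [mul_le_mul_of_nonneg_left h hβ]
        exact lt_of_le_of_lt (ENNReal.ofReal_le_ofReal hle) hp.2
  have hDpre : IsPreconnected D := hDconv.isPreconnected
  have hFanal : AnalyticOnNhd ℂ F D := hF_anal.analyticOnNhd hDopen
  have hFzeroD : Set.EqOn F 0 D :=
    hFanal.eqOn_zero_of_preconnected_of_eventuallyEq_zero hDpre hz1D hFev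
  intro z hz
  rcases hz with hz | hz
  · exact hFzeroD hz
  · exact hF_zero z hz
end

section
/- Let J ⊆ [-π, π] be a nonempty open interval, let B₁(0) = {z ∈ ℂ : |z| < 1} be the open unit disk, and let A = {z ∈ ℂ : |z| = 1, arg(z) ∈ J} be the corresponding open arc of the unit circle. Let F : B₁(0) ∪ A → ℂ be a continuous function such that the restriction of F to B₁(0) is analytic (complex differentiable). If F vanishes identically on A, then F vanishes identically on B₁(0) ∪ A. -/
open Complex Set intervalIntegral Interval

/-- Boundary integral over a rectangle whose open interior avoids the real line. -/
lemma rect_zero_aux {f : ℂ → ℂ} {s : Set ℂ} (hc : ContinuousOn f s)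
    (hd : ∀ z ∈ s, z.im ≠ 0 → DifferentiableAt ℂ f z)
    (z w : ℂ) (hsub : [[z.re, w.re]] ×ℂ [[z.im, w.im]] ⊆ s)
    (h0 : (0:ℝ) ∉ Ioo (min z.im w.im) (max z.im w.im)) :
    (∫ x : ℝ in z.re..w.re, f (x + z.im * I)) - (∫ x : ℝ in z.re..w.re, f (x + w.im * I)) +
      I • (∫ y : ℝ in z.im..w.im, f (re w + y * I)) -
      I • (∫ y : ℝ in z.im..w.im, f (re z + y * I)) = 0 := by
  apply integral_boundary_rect_eq_zero_of_continuousOn_of_differentiableOn f z w (hc.mono hsub)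
  intro x hx
  have hx' : x ∈ [[z.re, w.re]] ×ℂ [[z.im, w.im]] := by
    refine ⟨?_, ?_⟩
    · exact Ioo_subset_Icc_self hx.1
    · exact Ioo_subset_Icc_self hx.2
  exact (hd x (hsub hx') (fun h => h0 (h ▸ hx.2))).differentiableWithinAt

lemma vert_integrable {f : ℂ → ℂ} {s : Set ℂ} (hc : ContinuousOn f s)
    {x : ℝ} {c d : ℝ} (h : ∀ t ∈ [[c, d]], (x : ℂ) + t * I ∈ s) :
    IntervalIntegrable (fun y : ℝ => f (x + y * I)) MeasureTheory.volume c d := by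
  apply ContinuousOn.intervalIntegrable
  apply hc.comp (t := s) ?_ h
  fun_prop

/-- Rectangle Cauchy–Goursat for a function differentiable off the real line. -/
lemma rect_zero {f : ℂ → ℂ} {s : Set ℂ} (hc : ContinuousOn f s)
    (hd : ∀ z ∈ s, z.im ≠ 0 → DifferentiableAt ℂ f z)
    (z w : ℂ) (hsub : [[z.re, w.re]] ×ℂ [[z.im, w.im]] ⊆ s) :
    (∫ x : ℝ in z.re..w.re, f (x + z.im * I)) - (∫ x : ℝ in z.re..w.re, f (x + w.im * I)) +
      I • (∫ y : ℝ in z.im..w.im, f (re w + y * I)) -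
      I • (∫ y : ℝ in z.im..w.im, f (re z + y * I)) = 0 := by
  by_cases h0 : (0:ℝ) ∉ Ioo (min z.im w.im) (max z.im w.im)
  · exact rect_zero_aux hc hd z w hsub h0
  push_neg at h0
  have h0m : (0:ℝ) ∈ [[z.im, w.im]] := Ioo_subset_Icc_self h0
  have hsub1 : [[z.re, w.re]] ×ℂ [[z.im, (0:ℝ)]] ⊆ s := by
    refine subset_trans ?_ hsub
    exact reProdIm_subset_iff.2 (prod_mono subset_rfl (uIcc_subset_uIcc left_mem_uIcc h0m))
  have hsub2 : [[z.re, w.re]] ×ℂ [[(0:ℝ), w.im]] ⊆ s := by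
    refine subset_trans ?_ hsub
    exact reProdIm_subset_iff.2 (prod_mono subset_rfl (uIcc_subset_uIcc h0m right_mem_uIcc))
  have E1 := rect_zero_aux hc hd z (w.re : ℂ) (by simpa using hsub1) ?_
  rotate_left
  · simp only [ofReal_im]
    intro hmem
    rcases h0 with ⟨hlt1, hlt2⟩
    rcases hmem with ⟨hlt3, hlt4⟩
    rcases min_cases z.im 0 with ⟨heq, _⟩ | ⟨heq, hle⟩ <;> rcases max_cases z.im 0 with
      ⟨heq2, _⟩ | ⟨heq2, _⟩ <;> simp_all <;> linarith
  have E2 := rect_zero_aux hc hd (z.re : ℂ) w (by simpa using hsub2) ?_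
  rotate_left
  · simp only [ofReal_im]
    intro hmem
    rcases hmem with ⟨hlt3, hlt4⟩
    rcases min_cases (0:ℝ) w.im with ⟨heq, _⟩ | ⟨heq, hle⟩ <;> rcases max_cases (0:ℝ) w.im with
      ⟨heq2, _⟩ | ⟨heq2, _⟩ <;> simp_all <;> linarith
  simp only [ofReal_re, ofReal_im, ofReal_zero, zero_mul, add_zero] at E1 E2 ⊢
  have hink : ∀ t ∈ [[z.im, (0:ℝ)]] ∪ [[(0:ℝ), w.im]], t ∈ [[z.im, w.im]] := by
    intro t ht
    rcases ht with ht | ht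
    · exact uIcc_subset_uIcc left_mem_uIcc h0m ht
    · exact uIcc_subset_uIcc h0m right_mem_uIcc ht
  have hVw : (∫ y : ℝ in z.im..w.im, f (w.re + y * I)) =
      (∫ y : ℝ in z.im..(0:ℝ), f (w.re + y * I)) + ∫ y : ℝ in (0:ℝ)..w.im, f (w.re + y * I) := by
    refine (intervalIntegral.integral_add_adjacent_intervals ?_ ?_).symm
    · exact vert_integrable hc (fun t ht => hsub ⟨by simpa using right_mem_uIcc,
        by simpa using hink t (Or.inl ht)⟩)
    · exact vert_integrable hc (fun t ht => hsub ⟨by simpa using right_mem_uIcc,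
        by simpa using hink t (Or.inr ht)⟩)
  have hVz : (∫ y : ℝ in z.im..w.im, f (z.re + y * I)) =
      (∫ y : ℝ in z.im..(0:ℝ), f (z.re + y * I)) + ∫ y : ℝ in (0:ℝ)..w.im, f (z.re + y * I) := by
    refine (intervalIntegral.integral_add_adjacent_intervals ?_ ?_).symm
    · exact vert_integrable hc (fun t ht => hsub ⟨by simpa using left_mem_uIcc,
        by simpa using hink t (Or.inl ht)⟩)
    · exact vert_integrable hc (fun t ht => hsub ⟨by simpa using left_mem_uIcc,
        by simpa using hink t (Or.inr ht)⟩)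
  rw [hVw, hVz, smul_add, smul_add]
  simp only [smul_eq_mul] at E1 E2 ⊢
  linear_combination E1 + E2

/-- **Morera-type theorem across the real line**: a function continuous on an open set and
complex differentiable off the real line is differentiable on the whole set. -/
lemma differentiableOn_of_off_real {f : ℂ → ℂ} {s : Set ℂ} (hso : IsOpen s)
    (hc : ContinuousOn f s) (hd : ∀ z ∈ s, z.im ≠ 0 → DifferentiableAt ℂ f z) :
    DifferentiableOn ℂ f s := by
  intro z₀ hz₀
  by_cases him : z₀.im ≠ 0
  · exact (hd z₀ hz₀ him).differentiableWithinAt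
  push_neg at him
  -- pick a closed rectangle around z₀ inside s
  obtain ⟨ε, hε, hball⟩ := Metric.isOpen_iff.1 hso z₀ hz₀
  set r : ℝ := ε / 4 with hr
  have hrpos : 0 < r := by positivity
  set x₀ : ℝ := z₀.re
  set Q : Set ℂ := Ioo (x₀ - r) (x₀ + r) ×ℂ Ioo (-r) r with hQ
  have hQopen : IsOpen Q := isOpen_Ioo.reProdIm isOpen_Ioo
  have hQs : ∀ u : ℂ, u.re ∈ Icc (x₀ - r) (x₀ + r) → u.im ∈ Icc (-r) r → u ∈ s := by
    intro u hre him'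
    apply hball
    rw [Metric.mem_ball, Complex.dist_eq]
    calc Norm.norm (u - z₀) ≤ |(u - z₀).re| + |(u - z₀).im| := Complex.norm_le_abs_re_add_abs_im _
      _ ≤ r + r := by
          gcongr
          · rw [Complex.sub_re]
            exact abs_le.2 ⟨by linarith [hre.1], by linarith [hre.2]⟩
          · rw [Complex.sub_im, him, sub_zero]
            exact abs_le.2 ⟨him'.1, him'.2⟩
      _ < ε := by simp only [hr]; linarith
  have hQmem : ∀ u ∈ Q, u ∈ s := fun u hu =>
    hQs u (Ioo_subset_Icc_self hu.1) (Ioo_subset_Icc_self hu.2)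
  have hrect : ∀ z w : ℂ, z ∈ Q → w ∈ Q → [[z.re, w.re]] ×ℂ [[z.im, w.im]] ⊆ s := by
    intro z w hz hw u hu
    refine hQs u ?_ ?_
    · exact uIcc_subset_Icc (Ioo_subset_Icc_self hz.1) (Ioo_subset_Icc_self hw.1) hu.1
    · exact uIcc_subset_Icc (Ioo_subset_Icc_self hz.2) (Ioo_subset_Icc_self hw.2) hu.2
  -- the primitive
  set F : ℂ → ℂ := fun w =>
    (∫ t : ℝ in x₀..w.re, f t) + I * ∫ t : ℝ in (0:ℝ)..w.im, f (w.re + t * I) with hF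
  -- key difference formula
  have hkey : ∀ z ∈ Q, ∀ w ∈ Q, F w - F z =
      (∫ t : ℝ in z.re..w.re, f (t + w.im * I)) +
        I * ∫ t : ℝ in z.im..w.im, f (z.re + t * I) := by
    intro z hz w hw
    have hB := rect_zero hc hd (z.re : ℂ) w ?_
    rotate_left
    · have : ((z.re : ℂ)).re = z.re := ofReal_re _
      rw [this, ofReal_im]
      intro u hu
      refine hQs u (uIcc_subset_Icc (Ioo_subset_Icc_self hz.1) (Ioo_subset_Icc_self hw.1) hu.1)
        (uIcc_subset_Icc ⟨by linarith [hrpos], by linarith [hrpos]⟩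
          (Ioo_subset_Icc_self hw.2) hu.2)
    simp only [ofReal_re, ofReal_im, ofReal_zero, zero_mul, add_zero, smul_eq_mul] at hB
    -- horizontal additivity at level 0
    have hint_h : ∀ u : ℂ, u ∈ Q → IntervalIntegrable (fun t : ℝ => f (t : ℂ))
        MeasureTheory.volume x₀ u.re := by
      intro u hu
      apply ContinuousOn.intervalIntegrable
      apply hc.comp (t := s) Complex.continuous_ofReal.continuousOn
      intro t ht
      refine hQs t ?_ (by simp [le_of_lt hrpos])
      simp only [ofReal_re]
      exact uIcc_subset_Icc ⟨by linarith, by linarith⟩ (Ioo_subset_Icc_self hu.1) ht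
    have hH : (∫ t : ℝ in x₀..w.re, f t) - (∫ t : ℝ in x₀..z.re, f t) =
        ∫ t : ℝ in z.re..w.re, f t :=
      intervalIntegral.integral_interval_sub_left (hint_h w hw) (hint_h z hz)
    -- vertical additivity on the z.re side
    have hint_v : ∀ m : ℝ, m ∈ Icc (-r) r → IntervalIntegrable (fun t : ℝ => f (z.re + t * I))
        MeasureTheory.volume 0 m := by
      intro m hm
      refine vert_integrable hc (fun t ht => hQs _ (by simpa using Ioo_subset_Icc_self hz.1) ?_)
      simp only [add_im, ofReal_re, ofReal_im, mul_im, I_re, I_im, mul_zero, mul_one,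
        zero_add, zero_mul, add_zero, sub_zero]
      exact uIcc_subset_Icc ⟨by linarith, by linarith⟩ hm ht
    have hV : (∫ t : ℝ in (0:ℝ)..w.im, f (z.re + t * I)) -
        (∫ t : ℝ in (0:ℝ)..z.im, f (z.re + t * I)) =
        ∫ t : ℝ in z.im..w.im, f (z.re + t * I) :=
      intervalIntegral.integral_interval_sub_left
        (hint_v w.im (Ioo_subset_Icc_self hw.2)) (hint_v z.im (Ioo_subset_Icc_self hz.2))
    rw [hF]
    simp only
    linear_combination hH + I * hV + hB
  -- HasDerivAt F (f z) z on Q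
  have hder : ∀ z ∈ Q, HasDerivAt F (f z) z := by
    intro z hz
    rw [hasDerivAt_iff_isLittleO, Asymptotics.isLittleO_iff]
    intro c hconst
    have hcont : ContinuousAt f z := hc.continuousAt (hso.mem_nhds (hQmem z hz))
    rcases Metric.continuousAt_iff.1 hcont (c / 2) (by positivity) with ⟨δ₁, hδ₁, hfδ⟩
    rcases Metric.isOpen_iff.1 hQopen z hz with ⟨δ₂, hδ₂, hQδ⟩
    have hδ : (0:ℝ) < min δ₁ δ₂ / 2 := by positivity
    filter_upwards [Metric.ball_mem_nhds z hδ] with w hwball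
    rw [Metric.mem_ball, Complex.dist_eq] at hwball
    have hmin1 : min δ₁ δ₂ ≤ δ₁ := min_le_left _ _
    have hmin2 : min δ₁ δ₂ ≤ δ₂ := min_le_right _ _
    have hwz_re : |w.re - z.re| ≤ Norm.norm (w - z) := by
      simpa using Complex.abs_re_le_norm (w - z)
    have hwz_im : |w.im - z.im| ≤ Norm.norm (w - z) := by
      simpa using Complex.abs_im_le_norm (w - z)
    have hwQ : w ∈ Q := hQδ (by rw [Metric.mem_ball, Complex.dist_eq]; linarith)
    have hdiff := hkey z hz w hwQ
    -- integrability of the two integrands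
    have hih : IntervalIntegrable (fun t : ℝ => f (t + w.im * I))
        MeasureTheory.volume z.re w.re := by
      apply ContinuousOn.intervalIntegrable
      apply hc.comp (t := s) (by fun_prop)
      intro t ht
      refine hQs _ ?_ ?_
      · simp only [add_re, ofReal_re, mul_re, I_re, I_im, ofReal_im, mul_zero, zero_mul,
          mul_one, sub_zero, zero_sub, mul_im, zero_add]
        have := uIcc_subset_Icc (Ioo_subset_Icc_self hz.1) (Ioo_subset_Icc_self hwQ.1) ht
        simpa using this
      · simpa using Ioo_subset_Icc_self hwQ.2
    have hiv : IntervalIntegrable (fun t : ℝ => f (z.re + t * I))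
        MeasureTheory.volume z.im w.im := by
      refine vert_integrable hc (fun t ht => hQs _ (by simpa using Ioo_subset_Icc_self hz.1) ?_)
      simp only [add_im, ofReal_re, ofReal_im, mul_im, I_re, I_im, mul_zero, mul_one,
        zero_add, zero_mul, add_zero, sub_zero]
      exact uIcc_subset_Icc (Ioo_subset_Icc_self hz.2) (Ioo_subset_Icc_self hwQ.2) ht
    have hIh : (∫ t : ℝ in z.re..w.re, (f (t + w.im * I) - f z)) =
        (∫ t : ℝ in z.re..w.re, f (t + w.im * I)) - (w.re - z.re) • f z := by
      rw [intervalIntegral.integral_sub hih intervalIntegrable_const,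
        intervalIntegral.integral_const]
    have hIv : (∫ t : ℝ in z.im..w.im, (f (z.re + t * I) - f z)) =
        (∫ t : ℝ in z.im..w.im, f (z.re + t * I)) - (w.im - z.im) • f z := by
      rw [intervalIntegral.integral_sub hiv intervalIntegrable_const,
        intervalIntegral.integral_const]
    have hwzdecomp : (w - z : ℂ) = ((w.re - z.re : ℝ) : ℂ) + ((w.im - z.im : ℝ) : ℂ) * I := by
      apply Complex.ext <;> simp
    have heq : F w - F z - (w - z) • f z =
        (∫ t : ℝ in z.re..w.re, (f (t + w.im * I) - f z)) +
          I * ∫ t : ℝ in z.im..w.im, (f (z.re + t * I) - f z) := by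
      rw [hIh, hIv, smul_eq_mul, hwzdecomp]
      simp only [Complex.real_smul]
      linear_combination hdiff
    rw [heq]
    -- now estimate
    have hbh : ‖∫ t : ℝ in z.re..w.re, (f (t + w.im * I) - f z)‖ ≤
        (c / 2) * |w.re - z.re| := by
      apply intervalIntegral.norm_integral_le_of_norm_le_const
      intro t ht
      rw [← dist_eq_norm]
      apply le_of_lt (hfδ _)
      rw [Complex.dist_eq]
      have ht' : |t - z.re| ≤ |w.re - z.re| := by
        rcases le_total z.re w.re with h | h
        · rw [uIoc_of_le h] at ht
          rw [_root_.abs_of_nonneg (by linarith [ht.1] : (0:ℝ) ≤ t - z.re),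
            _root_.abs_of_nonneg (by linarith : (0:ℝ) ≤ w.re - z.re)]
          linarith [ht.2]
        · rw [uIoc_of_ge h] at ht
          rw [_root_.abs_of_nonpos (by linarith [ht.2] : t - z.re ≤ 0),
            _root_.abs_of_nonpos (by linarith : w.re - z.re ≤ 0)]
          linarith [ht.1]
      calc Norm.norm ((t + w.im * I : ℂ) - z) ≤ |((t + w.im * I : ℂ) - z).re| +
            |((t + w.im * I : ℂ) - z).im| := Complex.norm_le_abs_re_add_abs_im _
        _ = |t - z.re| + |w.im - z.im| := by simp
        _ < δ₁ := by linarith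
    have hbv : ‖∫ t : ℝ in z.im..w.im, (f (z.re + t * I) - f z)‖ ≤
        (c / 2) * |w.im - z.im| := by
      apply intervalIntegral.norm_integral_le_of_norm_le_const
      intro t ht
      rw [← dist_eq_norm]
      apply le_of_lt (hfδ _)
      rw [Complex.dist_eq]
      have ht' : |t - z.im| ≤ |w.im - z.im| := by
        rcases le_total z.im w.im with h | h
        · rw [uIoc_of_le h] at ht
          rw [_root_.abs_of_nonneg (by linarith [ht.1] : (0:ℝ) ≤ t - z.im),
            _root_.abs_of_nonneg (by linarith : (0:ℝ) ≤ w.im - z.im)]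
          linarith [ht.2]
        · rw [uIoc_of_ge h] at ht
          rw [_root_.abs_of_nonpos (by linarith [ht.2] : t - z.im ≤ 0),
            _root_.abs_of_nonpos (by linarith : w.im - z.im ≤ 0)]
          linarith [ht.1]
      calc Norm.norm ((z.re + t * I : ℂ) - z) ≤ |((z.re + t * I : ℂ) - z).re| +
            |((z.re + t * I : ℂ) - z).im| := Complex.norm_le_abs_re_add_abs_im _
        _ = |t - z.im| := by simp
        _ < δ₁ := by linarith
    calc ‖(∫ t : ℝ in z.re..w.re, (f (t + w.im * I) - f z)) +
          I * ∫ t : ℝ in z.im..w.im, (f (z.re + t * I) - f z)‖ ≤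
          ‖∫ t : ℝ in z.re..w.re, (f (t + w.im * I) - f z)‖ +
          ‖I * ∫ t : ℝ in z.im..w.im, (f (z.re + t * I) - f z)‖ := norm_add_le _ _
      _ = ‖∫ t : ℝ in z.re..w.re, (f (t + w.im * I) - f z)‖ +
          ‖∫ t : ℝ in z.im..w.im, (f (z.re + t * I) - f z)‖ := by
            rw [norm_mul, Complex.norm_I, one_mul]
      _ ≤ (c / 2) * |w.re - z.re| + (c / 2) * |w.im - z.im| := add_le_add hbh hbv
      _ ≤ c * ‖w - z‖ := by
            nlinarith [norm_nonneg (w - z)]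
  -- conclude
  have hFdiff : DifferentiableOn ℂ F Q := fun u hu =>
    (hder u hu).differentiableAt.differentiableWithinAt
  have hFan : AnalyticOnNhd ℂ F Q := hFdiff.analyticOnNhd hQopen
  have hz₀Q : z₀ ∈ Q := by
    refine ⟨⟨by linarith, by linarith⟩, ?_⟩
    simp only [mem_preimage, mem_Ioo, him]
    exact ⟨by linarith, hrpos⟩
  have hda : DifferentiableAt ℂ (deriv F) z₀ := ((hFan.deriv) z₀ hz₀Q).differentiableAt
  have hee : f =ᶠ[nhds z₀] deriv F := by
    filter_upwards [hQopen.mem_nhds hz₀Q] with u hu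
    exact ((hder u hu).deriv).symm
  exact (hda.congr_of_eventuallyEq hee).differentiableWithinAt


/-- **Uniqueness in the disk from vanishing on a boundary arc.**
Let `J = (a, b) ⊆ [-π, π]` be a nonempty open interval, `B₁(0)` the open unit disk and
`A = {z : |z| = 1, arg z ∈ J}` the corresponding open arc of the unit circle. If `F` is
continuous on `B₁(0)` ∪ `A`, analytic on `B₁(0)`, and vanishes identically on `A`,
then `F ≡ 0` on `B₁(0) ∪ A`. -/
theorem disk_vanishing_on_boundary_arc
    (a b : ℝ) (ha : -Real.pi ≤ a) (hab : a < b) (hb : b ≤ Real.pi)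
    (B A : Set ℂ)
    (hB : B = {z : ℂ | ‖z‖ < 1})
    (hA : A = {z : ℂ | ‖z‖ = 1 ∧ z.arg ∈ Set.Ioo a b})
    (F : ℂ → ℂ)
    (hF_cont : ContinuousOn F (B ∪ A))
    (hF_anal : DifferentiableOn ℂ F B)
    (hF_zero : ∀ z ∈ A, F z = 0) :
    ∀ z ∈ B ∪ A, F z = 0 := by
  have hpi := Real.pi_pos
  -- the open "wedge" through the arc
  set W : Set ℂ := {z : ℂ | z ≠ 0 ∧ z.arg ∈ Set.Ioo a b} with hWdef
  have hWslit : ∀ z ∈ W, z ∈ Complex.slitPlane := by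
    intro z hz
    rw [Complex.mem_slitPlane_iff_arg]
    exact ⟨ne_of_lt (lt_of_lt_of_le hz.2.2 hb), hz.1⟩
  have hWopen : IsOpen W := by
    rw [isOpen_iff_mem_nhds]
    intro z hz
    have h1 : ContinuousAt Complex.arg z := Complex.continuousAt_arg (hWslit z hz)
    have h2 : ∀ᶠ w in nhds z, w.arg ∈ Set.Ioo a b :=
      h1.eventually_mem (isOpen_Ioo.mem_nhds hz.2)
    have h3 : ∀ᶠ w in nhds z, w ≠ 0 := eventually_ne_nhds hz.1
    filter_upwards [h2, h3] with w hw2 hw3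
    exact ⟨hw3, hw2⟩
  have hBopen : IsOpen B := by
    rw [hB]; exact isOpen_lt continuous_norm continuous_const
  have hexto : IsOpen {w : ℂ | 1 < Norm.norm w} :=
    isOpen_lt continuous_const continuous_norm
  have hAW : A ⊆ W := by
    intro z hz
    rw [hA] at hz
    refine ⟨fun h => ?_, hz.2⟩
    rw [h] at hz
    simp at hz
  have hAchar : ∀ z ∈ W, Norm.norm z = 1 → z ∈ A := by
    intro z hz h1
    rw [hA]; exact ⟨h1, hz.2⟩
  set U : Set ℂ := B ∪ W with hUdef
  have hUopen : IsOpen U := hBopen.union hWopen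
  -- extension of F by zero outside the closed disk
  set G : ℂ → ℂ := fun z => if Norm.norm z < 1 then F z else 0 with hGdef
  have hGB : Set.EqOn G F B := by
    intro z hz
    exact if_pos (by rw [hB] at hz; exact hz)
  have hGzero : ∀ z : ℂ, ¬Norm.norm z < 1 → G z = 0 := fun z h => if_neg h
  -- continuity of G on U
  have hGcont : ContinuousOn G U := by
    intro z hz
    rcases lt_trichotomy (Norm.norm z) 1 with habs | habs | habs
    · have hzB : z ∈ B := by rw [hB]; exact habs
      have hopen1 : IsOpen {w : ℂ | Norm.norm w < 1} :=
        isOpen_lt continuous_norm continuous_const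
      have hFat : ContinuousAt F z :=
        (hF_anal.differentiableAt (hBopen.mem_nhds hzB)).continuousAt
      refine (hFat.congr ?_).continuousWithinAt
      filter_upwards [hopen1.mem_nhds habs] with w hw
      exact (if_pos hw).symm
    · have hzA : z ∈ A := by
        refine hAchar z ?_ habs
        rcases hz with hz | hz
        · rw [hB] at hz
          rw [Set.mem_setOf_eq, habs] at hz
          exact absurd hz (lt_irrefl 1)
        · exact hz
      have hFz : F z = 0 := hF_zero z hzA
      have hFcw : ContinuousWithinAt F (B ∪ A) z := hF_cont z (Or.inr hzA)
      have hGz : G z = 0 := hGzero z (by rw [habs]; exact lt_irrefl 1)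
      rw [ContinuousWithinAt, hGz]
      rw [ContinuousWithinAt, hFz] at hFcw
      rw [Metric.tendsto_nhdsWithin_nhds] at hFcw ⊢
      intro ε hε
      obtain ⟨δ, hδ, hF'⟩ := hFcw ε hε
      refine ⟨δ, hδ, ?_⟩
      intro w hwU hdist
      by_cases habsw : Norm.norm w < 1
      · rw [show G w = F w from if_pos habsw]
        exact hF' (Or.inl (by rw [hB]; exact habsw)) hdist
      · rw [hGzero w habsw]
        simpa using hε
    · refine (ContinuousAt.congr (continuousAt_const (y := (0:ℂ))) ?_).continuousWithinAt
      filter_upwards [hexto.mem_nhds habs] with w hw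
      exact (hGzero w (not_lt.2 (le_of_lt hw))).symm
  -- differentiability of G off the unit circle
  have hGdiffB : ∀ z ∈ B, DifferentiableAt ℂ G z := by
    intro z hz
    refine (hF_anal.differentiableAt (hBopen.mem_nhds hz)).congr_of_eventuallyEq ?_
    filter_upwards [hBopen.mem_nhds hz] with w hw
    exact hGB hw
  have hGdiffE : ∀ z : ℂ, 1 < Norm.norm z → DifferentiableAt ℂ G z := by
    intro z hz
    refine (differentiableAt_const (0:ℂ)).congr_of_eventuallyEq ?_
    filter_upwards [hexto.mem_nhds hz] with w hw
    exact hGzero w (not_lt.2 (le_of_lt hw))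
  -- straighten the circle with the exponential
  set φ : ℂ → ℂ := fun w => Complex.exp (w * I) with hφdef
  set Ω : Set ℂ := Complex.re ⁻¹' Set.Ioo a b with hΩdef
  have hΩopen : IsOpen Ω := isOpen_Ioo.preimage Complex.continuous_re
  have hargIoc : ∀ θ : ℝ, θ ∈ Set.Ioo a b → (Complex.exp (θ * I)).arg = θ := by
    intro θ hθ
    rw [Complex.exp_mul_I]
    exact Complex.arg_cos_add_sin_mul_I
      ⟨lt_of_le_of_lt ha hθ.1, le_of_lt (lt_of_lt_of_le hθ.2 hb)⟩
  have hφeq : ∀ w : ℂ, φ w = (Real.exp (-w.im) : ℝ) * Complex.exp (w.re * I) := by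
    intro w
    rw [hφdef]
    simp only
    rw [Complex.ofReal_exp, ← Complex.exp_add]
    congr 1
    apply Complex.ext <;> simp
  have hφarg : ∀ w : ℂ, w.re ∈ Set.Ioo a b → (φ w).arg = w.re := by
    intro w hw
    rw [hφeq w, Complex.arg_real_mul _ (Real.exp_pos _)]
    exact hargIoc _ hw
  have hφabs : ∀ w : ℂ, Norm.norm (φ w) = Real.exp (-w.im) := by
    intro w
    rw [hφdef]
    simp only
    rw [Complex.norm_exp]
    congr 1
    simp
  have hφmem : ∀ w ∈ Ω, φ w ∈ W := by
    intro w hw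
    exact ⟨Complex.exp_ne_zero _, by rw [hφarg w hw]; exact hw⟩
  have hφdiff : Differentiable ℂ φ := fun w => by
    apply DifferentiableAt.cexp
    fun_prop
  -- the straightened function
  set H : ℂ → ℂ := G ∘ φ with hHdef
  have hHcont : ContinuousOn H Ω :=
    hGcont.comp hφdiff.continuous.continuousOn (fun w hw => Or.inr (hφmem w hw))
  have hHdiff : ∀ w ∈ Ω, w.im ≠ 0 → DifferentiableAt ℂ H w := by
    intro w _ him
    rcases him.lt_or_gt with him | him
    · -- w.im < 0 : φ w outside the closed disk
      have : 1 < Norm.norm (φ w) := by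
        rw [hφabs w]
        exact Real.one_lt_exp_iff.mpr (by linarith)
      exact (hGdiffE _ this).comp w (hφdiff w)
    · -- w.im > 0 : φ w in the disk
      have : Norm.norm (φ w) < 1 := by
        rw [hφabs w]
        exact Real.exp_lt_one_iff.mpr (by linarith)
      exact (hGdiffB _ (by rw [hB]; exact this)).comp w (hφdiff w)
  have hH : DifferentiableOn ℂ H Ω := differentiableOn_of_off_real hΩopen hHcont hHdiff
  -- transfer differentiability back to W via the logarithm
  have hGdiffW : ∀ z ∈ W, DifferentiableAt ℂ G z := by
    intro z hz
    set ψ : ℂ → ℂ := fun u => -I * Complex.log u with hψdef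
    have hψre : ∀ u : ℂ, (ψ u).re = u.arg := by
      intro u
      rw [hψdef]
      simp only [Complex.neg_re, Complex.mul_re, Complex.I_re, Complex.I_im, zero_mul,
        one_mul, zero_sub, neg_neg, Complex.neg_im]
      rw [Complex.log_im]
      ring
    have hψΩ : ψ z ∈ Ω := by
      rw [hΩdef, Set.mem_preimage, hψre z]
      exact hz.2
    have hψdiff : DifferentiableAt ℂ ψ z :=
      (Complex.differentiableAt_log (hWslit z hz)).const_mul _
    have hcomp : ∀ u : ℂ, u ≠ 0 → φ (ψ u) = u := by
      intro u hu
      rw [hφdef, hψdef]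
      simp only
      have : -I * Complex.log u * I = Complex.log u := by
        have h := Complex.I_mul_I
        linear_combination (-(Complex.log u)) * h
      rw [this]
      exact Complex.exp_log hu
    have heq : G =ᶠ[nhds z] H ∘ ψ := by
      filter_upwards [hWopen.mem_nhds hz] with u hu
      show G u = G (φ (ψ u))
      rw [hcomp u hu.1]
    refine DifferentiableAt.congr_of_eventuallyEq ?_ heq
    exact ((hH.differentiableAt (hΩopen.mem_nhds hψΩ)).comp z hψdiff)
  have hGdiffU : DifferentiableOn ℂ G U := by
    intro z hz
    rcases hz with hz | hz
    · exact (hGdiffB z hz).differentiableWithinAt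
    · exact (hGdiffW z hz).differentiableWithinAt
  have hGanal : AnalyticOnNhd ℂ G U := hGdiffU.analyticOnNhd hUopen
  -- connectivity
  have hBball : B = Metric.ball (0:ℂ) 1 := by
    rw [hB]; ext z; simp [Metric.mem_ball, Complex.dist_eq]
  have hBconn : IsPreconnected B := by
    rw [hBball]; exact (convex_ball _ _).isPreconnected
  have hWconn : IsPreconnected W := by
    have himg : W = (fun p : ℝ × ℝ => (p.1 : ℂ) * Complex.exp (p.2 * I)) ''
        (Set.Ioi 0 ×ˢ Set.Ioo a b) := by
      ext z
      constructor
      · intro hz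
        refine ⟨(Norm.norm z, z.arg), ⟨?_, hz.2⟩, ?_⟩
        · exact norm_pos_iff.2 hz.1
        · exact Complex.norm_mul_exp_arg_mul_I z
      · rintro ⟨⟨r, θ⟩, ⟨hr, hθ⟩, rfl⟩
        constructor
        · exact mul_ne_zero (by simpa using ne_of_gt hr) (Complex.exp_ne_zero _)
        · rw [Complex.arg_real_mul _ hr, hargIoc θ hθ]
          exact hθ
    rw [himg]
    apply IsPreconnected.image
    · exact ((convex_Ioi (0:ℝ)).prod (convex_Ioo a b)).isPreconnected
    · apply Continuous.continuousOn
      fun_prop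
  set θ₀ : ℝ := (a + b) / 2 with hθ₀
  have hθ₀mem : θ₀ ∈ Set.Ioo a b := ⟨by rw [hθ₀]; linarith, by rw [hθ₀]; linarith⟩
  have hptW : ∀ r : ℝ, 0 < r → ((r : ℂ) * Complex.exp (θ₀ * I)) ∈ W := by
    intro r hr
    constructor
    · exact mul_ne_zero (by simpa using ne_of_gt hr) (Complex.exp_ne_zero _)
    · rw [Complex.arg_real_mul _ hr, hargIoc θ₀ hθ₀mem]
      exact hθ₀mem
  have hptabs : ∀ r : ℝ, 0 < r → Norm.norm ((r : ℂ) * Complex.exp (θ₀ * I)) = r := by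
    intro r hr
    rw [norm_mul, Complex.norm_exp]
    simp [abs_of_pos hr]
  have hUconn : IsPreconnected U := by
    apply IsPreconnected.union ((2⁻¹ : ℝ) * Complex.exp (θ₀ * I))
    · rw [hB, Set.mem_setOf_eq, hptabs _ (by norm_num)]; norm_num
    · exact hptW _ (by norm_num)
    · exact hBconn
    · exact hWconn
  -- the exterior point where G vanishes identically near it
  set z₁ : ℂ := (2 : ℝ) * Complex.exp (θ₀ * I) with hz₁
  have hz₁W : z₁ ∈ U := Or.inr (hptW 2 (by norm_num))
  have hz₁abs : 1 < Norm.norm z₁ := by rw [hz₁, hptabs 2 (by norm_num)]; norm_num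
  have hev : G =ᶠ[nhds z₁] 0 := by
    filter_upwards [hexto.mem_nhds hz₁abs] with u hu
    exact hGzero u (not_lt.2 (le_of_lt hu))
  have hGzeroU : Set.EqOn G 0 U :=
    hGanal.eqOn_zero_of_preconnected_of_eventuallyEq_zero hUconn hz₁W hev
  -- conclusion
  intro z hz
  rcases hz with hz | hz
  · have := hGzeroU (Or.inl hz)
    rw [← hGB hz]
    simpa using this
  · exact hF_zero z hz
end

section
/- Let s > 1/2 and let f : 𝕊¹ → ℝ be a continuous real-valued function with f ∈ H^s(𝕊¹), and let g : 𝕊¹ → ℝ be the continuous representative of the periodic Hilbert transform ℋf. If there exists a nonempty open arc A ⊆ 𝕊¹ such that f(x) = 0 and g(x) = 0 for all x ∈ A, then f(x) = 0 for all x ∈ 𝕊¹. -/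
open MeasureTheory Complex Filter Topology

noncomputable section

/-- The `n`-th Fourier coefficient of a `1`-periodic function `f : ℝ → ℂ` (viewed as a
function on `𝕊¹ = ℝ/ℤ`) : `f̂(n) = ∫₀¹ f(x) e^{-2πinx} dx`. -/
def fourierCoefP (f : ℝ → ℂ) (n : ℤ) : ℂ :=
  ∫ x in (0 : ℝ)..1, Complex.exp (-2 * Real.pi * Complex.I * n * x) * f x

/-- `f ∈ H^s(𝕊¹)` for a `1`-periodic `f : ℝ → ℂ` : `∑ₙ (1+n²)^s |f̂(n)|² < ∞`. -/
def MemHsP (s : ℝ) (f : ℝ → ℂ) : Prop :=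
  Summable fun n : ℤ => (1 + (n : ℝ) ^ 2) ^ s * ‖fourierCoefP f n‖ ^ 2

/-- `HasPeriodicHilbertTransform f h` : the `1`-periodic function `h` has Fourier
coefficients `ĥ(n) = -i · sgn(n) · f̂(n)`, i.e. `h` represents the periodic Hilbert
transform `ℋf` of the `1`-periodic function `f`. -/
def HasPeriodicHilbertTransform (f h : ℝ → ℂ) : Prop :=
  ∀ n : ℤ, fourierCoefP h n = -Complex.I * (Int.sign n : ℂ) * fourierCoefP f n

instance : Fact ((0:ℝ) < 1) := ⟨one_pos⟩

namespace PHTUC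

/-- `e^{2πiθ}`. -/
def eθ (θ : ℝ) : ℂ := Complex.exp (2 * Real.pi * Complex.I * θ)

lemma eθ_norm (θ : ℝ) : ‖eθ θ‖ = 1 := by
  have h : (2 * (Real.pi:ℂ) * Complex.I * θ) = ((2 * Real.pi * θ : ℝ) : ℂ) * Complex.I := by
    push_cast; ring
  rw [eθ, h, Complex.norm_exp_ofReal_mul_I]

lemma eθ_add (θ₁ θ₂ : ℝ) : eθ (θ₁ + θ₂) = eθ θ₁ * eθ θ₂ := by
  rw [eθ, eθ, eθ, ← Complex.exp_add]; congr 1; push_cast; ring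

lemma eθ_zero : eθ 0 = 1 := by simp [eθ]

lemma eθ_int (m : ℤ) : eθ m = 1 := by
  rw [eθ]
  rw [show (2 * (Real.pi:ℂ) * Complex.I * (m:ℝ)) = (m:ℂ) * (2 * Real.pi * Complex.I) by
    push_cast; ring]
  exact Complex.exp_int_mul_two_pi_mul_I m

lemma eθ_add_int (θ : ℝ) (m : ℤ) : eθ (θ + m) = eθ θ := by
  rw [eθ_add, eθ_int, mul_one]

/-- product of finitely many analytic functions is analytic -/
lemma analyticOnNhd_finset_prod {ι : Type*} (s : Finset ι) (F : ι → ℂ → ℂ) (U : Set ℂ)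
    (hF : ∀ i ∈ s, AnalyticOnNhd ℂ (F i) U) :
    AnalyticOnNhd ℂ (fun z => ∏ i ∈ s, F i z) U := by
  induction s using Finset.cons_induction with
  | empty => simpa using (analyticOnNhd_const : AnalyticOnNhd ℂ (fun _ => (1:ℂ)) U)
  | cons a s ha ih =>
      simp only [Finset.prod_cons]
      exact (hF a (Finset.mem_cons_self a s)).mul
        (ih fun i hi => hF i (Finset.mem_cons_of_mem hi))

/-- If a finite product of analytic functions vanishes identically on the unit ball,
some factor vanishes identically. -/
lemma factor_zero {ι : Type*} (s : Finset ι) (F : ι → ℂ → ℂ)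
    (hF : ∀ i ∈ s, AnalyticOnNhd ℂ (F i) (Metric.ball (0:ℂ) 1))
    (h0 : ∀ z ∈ Metric.ball (0:ℂ) 1, ∏ i ∈ s, F i z = 0) :
    ∃ i ∈ s, ∀ z ∈ Metric.ball (0:ℂ) 1, F i z = 0 := by
  induction s using Finset.cons_induction with
  | empty =>
      exfalso
      have := h0 0 (by simp)
      simpa using this
  | cons a s ha ih =>
      by_cases hA : ∀ z ∈ Metric.ball (0:ℂ) 1, F a z = 0
      · exact ⟨a, Finset.mem_cons_self a s, hA⟩
      · push_neg at hA
        obtain ⟨z₀, hz₀, hz₀ne⟩ := hA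
        have hAa : AnalyticOnNhd ℂ (F a) (Metric.ball (0:ℂ) 1) :=
          hF a (Finset.mem_cons_self a s)
        have hca : ContinuousAt (F a) z₀ := (hAa z₀ hz₀).continuousAt
        have hev1 : ∀ᶠ z in 𝓝 z₀, F a z ≠ 0 := hca.eventually_ne hz₀ne
        have hev2 : ∀ᶠ z in 𝓝 z₀, z ∈ Metric.ball (0:ℂ) 1 :=
          Metric.isOpen_ball.mem_nhds hz₀
        have hev : (fun z => ∏ i ∈ s, F i z) =ᶠ[𝓝 z₀] 0 := by
          filter_upwards [hev1, hev2] with z h1 h2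
          have := h0 z h2
          rw [Finset.prod_cons] at this
          exact (mul_eq_zero.mp this).resolve_left h1
        have hprod : AnalyticOnNhd ℂ (fun z => ∏ i ∈ s, F i z) (Metric.ball (0:ℂ) 1) :=
          analyticOnNhd_finset_prod s F _ fun i hi => hF i (Finset.mem_cons_of_mem hi)
        have hEq : Set.EqOn (fun z => ∏ i ∈ s, F i z) 0 (Metric.ball (0:ℂ) 1) :=
          hprod.eqOn_zero_of_preconnected_of_eventuallyEq_zero
            (convex_ball (0:ℂ) 1).isPreconnected hz₀ hev
        obtain ⟨i, hi, hiz⟩ := ih (fun i hi => hF i (Finset.mem_cons_of_mem hi))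
          (fun z hz => hEq hz)
        exact ⟨i, Finset.mem_cons_of_mem hi, hiz⟩

/-- Core analytic lemma: a power series with absolutely summable coefficients whose boundary
values vanish on an arc has vanishing boundary values everywhere. -/
lemma core (c : ℕ → ℂ) (hc : Summable fun n => ‖c n‖) (a b : ℝ) (hab : a < b)
    (hvan : ∀ θ ∈ Set.Ioo a b, (∑' n : ℕ, c n * eθ θ ^ n) = 0) (θ : ℝ) :
    (∑' n : ℕ, c n * eθ θ ^ n) = 0 := by
  set Φ : ℂ → ℂ := fun z => ∑' n : ℕ, c n * z ^ n with hΦ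
  -- summability on the closed ball
  have hbound : ∀ (n : ℕ), ∀ z ∈ Metric.closedBall (0:ℂ) 1, ‖c n * z ^ n‖ ≤ ‖c n‖ := by
    intro n z hz
    rw [norm_mul, norm_pow]
    have hz1 : ‖z‖ ≤ 1 := by simpa using hz
    exact mul_le_of_le_one_right (norm_nonneg _) (pow_le_one₀ (norm_nonneg z) hz1)
  have hΦcont : ContinuousOn Φ (Metric.closedBall (0:ℂ) 1) :=
    continuousOn_tsum (fun n => (continuous_const.mul (continuous_pow n)).continuousOn)
      hc hbound
  -- power series
  set p : FormalMultilinearSeries ℂ ℂ ℂ := FormalMultilinearSeries.ofScalars ℂ c with hp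
  have hrad : (1 : ENNReal) ≤ p.radius := by
    have : Summable fun n => ‖p n‖ * ((1:NNReal):ℝ) ^ n := by
      simp only [hp, FormalMultilinearSeries.ofScalars_norm, NNReal.coe_one, one_pow, mul_one]
      exact hc
    simpa using p.le_radius_of_summable this
  have hpos : (0 : ENNReal) < p.radius := lt_of_lt_of_le zero_lt_one hrad
  have hsum_eq : p.sum = Φ := by
    funext z
    exact tsum_congr fun n => by
      rw [FormalMultilinearSeries.ofScalars_apply_eq, smul_eq_mul]
  have hps : HasFPowerSeriesOnBall Φ p 0 p.radius := hsum_eq ▸ p.hasFPowerSeriesOnBall hpos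
  have hball_sub : Metric.ball (0:ℂ) 1 ⊆ EMetric.ball (0:ℂ) p.radius := by
    rw [show Metric.ball (0:ℂ) 1 = EMetric.ball (0:ℂ) ((1:NNReal):ENNReal) by
      rw [show EMetric.ball (0:ℂ) ((1:NNReal):ENNReal) = Metric.eball 0 ((1:NNReal):ENNReal) from rfl,
        Metric.emetric_ball_nnreal]; norm_num]
    exact EMetric.ball_subset_ball (by simpa using hrad)
  have hΦan : AnalyticOnNhd ℂ Φ (Metric.ball (0:ℂ) 1) :=
    fun z hz => hps.analyticOnNhd z (hball_sub hz)
  -- choose N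
  obtain ⟨n₀, hn₀⟩ := exists_nat_one_div_lt (sub_pos.mpr hab)
  set N : ℕ := n₀ + 1 with hN
  have hNpos : (0:ℝ) < N := by positivity
  have hNlt : (1:ℝ)/N < b - a := by exact_mod_cast hn₀
  -- covering claim
  have hcover : ∀ φ : ℝ, ∃ k : ℕ, k < N ∧ ∃ m : ℤ, φ + k/N + m ∈ Set.Ioo a b := by
    intro φ
    set t : ℤ := ⌊(N:ℝ) * (a - φ)⌋ + 1 with ht
    have htr : (t:ℝ) = (⌊(N:ℝ) * (a - φ)⌋ : ℝ) + 1 := by rw [ht]; push_cast; ring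
    have h1 : (N:ℝ) * (a - φ) < t := by
      rw [htr]; exact Int.lt_floor_add_one _
    have h2 : (t:ℝ) ≤ (N:ℝ) * (a - φ) + 1 := by
      rw [htr]
      have := Int.floor_le ((N:ℝ) * (a - φ))
      linarith
    have hmem : φ + (t:ℝ)/N ∈ Set.Ioo a b := by
      constructor
      · have : a - φ < (t:ℝ)/N := (lt_div_iff₀ hNpos).mpr (by linarith)
        linarith
      · have : (t:ℝ)/N ≤ (a - φ) + 1/N := by
          rw [div_le_iff₀ hNpos]
          have : ((a - φ) + 1/N) * N = (N:ℝ) * (a - φ) + 1 := by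
            field_simp
          linarith [this]
        linarith
    have hNz : (N:ℤ) ≠ 0 := by positivity
    have hmod_nonneg : 0 ≤ t % N := Int.emod_nonneg t hNz
    have hmod_lt : t % N < N := Int.emod_lt_of_pos t (by positivity)
    refine ⟨(t % N).toNat, ?_, t / N, ?_⟩
    · omega
    · have hkt : ((t % N).toNat : ℤ) = t % N := Int.toNat_of_nonneg hmod_nonneg
      have hsplit : ((t % N).toNat : ℝ) + (N:ℝ) * (t / N : ℤ) = t := by
        have h' : ((t % N).toNat : ℤ) + (N:ℤ) * (t / N) = t := by
          rw [hkt, Int.emod_def]; ring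
        exact_mod_cast congrArg (fun z : ℤ => (z:ℝ)) h'
      have : φ + ((t % N).toNat : ℝ)/N + (t / N : ℤ) = φ + (t:ℝ)/N := by
        field_simp
        linarith [hsplit]
      rw [this]; exact hmem
  -- the product function G
  set G : ℂ → ℂ := fun z => ∏ k ∈ Finset.range N, Φ (eθ (k/N) * z) with hG
  have hmaps : ∀ (u : ℝ) (z : ℂ), ‖eθ u * z‖ = ‖z‖ := by
    intro u z; rw [norm_mul, eθ_norm, one_mul]
  have hfac_an : ∀ k : ℕ, AnalyticOnNhd ℂ (fun z => Φ (eθ (k/N) * z)) (Metric.ball (0:ℂ) 1) := by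
    intro k
    have hl : AnalyticOnNhd ℂ (fun z : ℂ => eθ (k/N) * z) (Metric.ball (0:ℂ) 1) :=
      analyticOnNhd_const.mul analyticOnNhd_id
    exact hΦan.comp hl (fun z hz => by
      simp only [Metric.mem_ball, dist_zero_right] at hz ⊢
      rw [hmaps]; exact hz)
  have hGan : AnalyticOnNhd ℂ G (Metric.ball (0:ℂ) 1) :=
    analyticOnNhd_finset_prod _ _ _ fun k _ => hfac_an k
  have hGcont : ContinuousOn G (Metric.closedBall (0:ℂ) 1) := by
    apply continuousOn_finset_prod
    intro k _
    apply hΦcont.comp ((continuous_const.mul continuous_id).continuousOn)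
    intro z hz
    simp only [Metric.mem_closedBall, dist_zero_right] at hz ⊢
    show ‖eθ (k/N) * z‖ ≤ 1
    rw [hmaps]; exact hz
  -- G vanishes on the sphere
  have hGsphere : ∀ z ∈ Metric.sphere (0:ℂ) 1, G z = 0 := by
    intro z hz
    have hz1 : ‖z‖ = 1 := by simpa using hz
    set φ : ℝ := z.arg / (2 * Real.pi) with hφ
    have hzeq : z = eθ φ := by
      have habs : ((‖z‖ : ℝ) : ℂ) = 1 := by
        rw [hz1]; norm_num
      have := Complex.norm_mul_exp_arg_mul_I z
      rw [habs, one_mul] at this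
      rw [← this, eθ]
      congr 1
      have hpi : (Real.pi : ℝ) ≠ 0 := Real.pi_ne_zero
      push_cast [hφ]
      have hπ : (Real.pi : ℂ) ≠ 0 := by exact_mod_cast hpi
      field_simp
      try ring
    obtain ⟨k, hk, m, hm⟩ := hcover φ
    apply Finset.prod_eq_zero (Finset.mem_range.mpr hk)
    have : eθ ((k:ℝ)/N) * z = eθ (φ + k/N + m) := by
      rw [hzeq, eθ_add_int, eθ_add, mul_comm]
    rw [this]
    exact hvan _ hm
  -- maximum modulus: G = 0 on the closed ball
  have hGzero : ∀ z ∈ Metric.closedBall (0:ℂ) 1, G z = 0 := by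
    intro z hz
    have hdc : DiffContOnCl ℂ G (Metric.ball (0:ℂ) 1) :=
      ⟨hGan.differentiableOn, by rwa [closure_ball (0:ℂ) one_ne_zero]⟩
    have hb : ∀ w ∈ frontier (Metric.ball (0:ℂ) 1), ‖G w‖ ≤ 0 := by
      intro w hw
      rw [frontier_ball (0:ℂ) one_ne_zero] at hw
      rw [hGsphere w hw, norm_zero]
    have := Complex.norm_le_of_forall_mem_frontier_norm_le Metric.isBounded_ball hdc hb
      (by rwa [closure_ball (0:ℂ) one_ne_zero])
    exact norm_le_zero_iff.mp this
  -- some factor vanishes on the ball, so Φ vanishes on the ball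
  obtain ⟨k, hk, hkz⟩ := factor_zero (Finset.range N) (fun k z => Φ (eθ (k/N) * z))
    (fun k _ => hfac_an k) (fun z hz => hGzero z (Metric.ball_subset_closedBall hz))
  have hΦball : ∀ w ∈ Metric.ball (0:ℂ) 1, Φ w = 0 := by
    intro w hw
    have hw' : eθ (-(k/N)) * w ∈ Metric.ball (0:ℂ) 1 := by
      simp only [Metric.mem_ball, dist_zero_right] at hw ⊢
      rw [hmaps]; exact hw
    have := hkz _ hw'
    rwa [← mul_assoc, ← eθ_add, add_neg_cancel, eθ_zero, one_mul] at this
  -- pass to the boundary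
  have hzθ : eθ θ ∈ Metric.closedBall (0:ℂ) 1 := by
    simp only [Metric.mem_closedBall, dist_zero_right]
    rw [eθ_norm]
  have hclos : eθ θ ∈ closure (Metric.ball (0:ℂ) 1) := by
    rwa [closure_ball (0:ℂ) one_ne_zero]
  have hnb : (𝓝[Metric.ball (0:ℂ) 1] (eθ θ)).NeBot :=
    mem_closure_iff_nhdsWithin_neBot.mp hclos
  have h1 : Tendsto Φ (𝓝[Metric.ball (0:ℂ) 1] (eθ θ)) (𝓝 (Φ (eθ θ))) :=
    ((hΦcont (eθ θ) hzθ).mono Metric.ball_subset_closedBall)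
  have h2 : Tendsto Φ (𝓝[Metric.ball (0:ℂ) 1] (eθ θ)) (𝓝 0) := by
    apply Tendsto.congr' _ tendsto_const_nhds
    filter_upwards [self_mem_nhdsWithin] with w hw
    exact (hΦball w hw).symm
  exact (tendsto_nhds_unique h1 h2)


end PHTUC

namespace PHTUC

instance : Fact ((0:ℝ) < 1) := ⟨one_pos⟩

/-- weight summability -/
lemma summable_weight {s : ℝ} (hs : 1/2 < s) :
    Summable fun n : ℤ => (1 + (n:ℝ)^2) ^ (-s) := by
  have h2s : (1:ℝ) < 2*s := by linarith
  have hind : Summable fun n : ℤ => (if n = 0 then (1:ℝ) else 0) := by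
    apply summable_of_ne_finset_zero (s := {0})
    intro n hn
    simp only [Finset.mem_singleton] at hn
    simp [hn]
  have hsum : Summable fun n : ℤ => |(n:ℝ)| ^ (-(2*s)) + (if n = 0 then (1:ℝ) else 0) :=
    (Real.summable_abs_int_rpow h2s).add hind
  refine hsum.of_nonneg_of_le (fun n => Real.rpow_nonneg (by positivity) _) (fun n => ?_)
  rcases eq_or_ne n 0 with rfl | hn
  · simp [Real.zero_rpow (by linarith : -(2*s) ≠ 0)]
  · have hne : ((n:ℝ)) ≠ 0 := Int.cast_ne_zero.mpr hn
    have h1 : (1 + (n:ℝ)^2) ^ (-s) ≤ ((n:ℝ)^2) ^ (-s) :=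
      Real.rpow_le_rpow_of_nonpos (by positivity) (by nlinarith) (by linarith)
    have h2 : ((n:ℝ)^2) ^ (-s) = |(n:ℝ)| ^ (-(2*s)) := by
      rw [← _root_.sq_abs (n:ℝ), ← Real.rpow_natCast |(n:ℝ)| 2, ← Real.rpow_mul (abs_nonneg _)]
      norm_num
    simp only [hn, if_false, add_zero]
    rw [← h2]; exact h1

/-- Cauchy–Schwarz / AM-GM : `H^s` with `s > 1/2` gives absolutely summable coefficients. -/
lemma summable_norm_coef {s : ℝ} (hs : 1/2 < s) {u : ℤ → ℂ}
    (h : Summable fun n : ℤ => (1 + (n:ℝ)^2) ^ s * ‖u n‖ ^ 2) :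
    Summable fun n : ℤ => ‖u n‖ := by
  have hw := summable_weight hs
  refine Summable.of_nonneg_of_le (fun n => norm_nonneg _) (fun n => ?_)
    ((h.add hw).mul_left (2⁻¹ : ℝ))
  have hx0 : (0:ℝ) < 1 + (n:ℝ)^2 := by positivity
  set x := (1 + (n:ℝ)^2) with hxdef
  have key := two_mul_le_add_sq (x ^ (s/2) * ‖u n‖) (x ^ (-(s/2)))
  have e1 : x ^ (s/2) * x ^ (-(s/2)) = 1 := by
    rw [← Real.rpow_add hx0]; simp
  have e2 : (x ^ (s/2)) ^ 2 = x ^ s := by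
    rw [sq, ← Real.rpow_add hx0]; ring_nf
  have e3 : (x ^ (-(s/2))) ^ 2 = x ^ (-s) := by
    rw [sq, ← Real.rpow_add hx0]; ring_nf
  have lhs : x ^ (s/2) * ‖u n‖ * x ^ (-(s/2)) = ‖u n‖ := by
    rw [mul_comm (x ^ (s/2)) ‖u n‖, mul_assoc, e1, mul_one]
  have rhs : (x ^ (s/2) * ‖u n‖) ^ 2 = x ^ s * ‖u n‖ ^ 2 := by
    rw [mul_pow, e2]
  rw [mul_assoc] at key
  rw [lhs, rhs, e3] at key
  linarith

lemma liftIco_coe_of_periodic {f : ℝ → ℂ} (hf : Function.Periodic f 1) (x : ℝ) :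
    AddCircle.liftIco (1:ℝ) 0 f ↑x = f x := by
  have hfr : Int.fract x = x - (⌊x⌋:ℝ) := rfl
  have hz : (((⌊x⌋ : ℤ) : ℝ) : AddCircle (1:ℝ)) = 0 := by
    rw [AddCircle.coe_eq_zero_iff]
    exact ⟨⌊x⌋, by simp⟩
  have h1 : ((Int.fract x : ℝ) : AddCircle (1:ℝ)) = (x : AddCircle (1:ℝ)) := by
    rw [hfr, QuotientAddGroup.mk_sub, hz, sub_zero]
  have h2 : AddCircle.liftIco (1:ℝ) 0 f ↑(Int.fract x) = f (Int.fract x) :=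
    AddCircle.liftIco_coe_apply (by
      constructor
      · exact Int.fract_nonneg x
      · rw [zero_add]; exact Int.fract_lt_one x)
  have h3 : f (Int.fract x) = f x := by
    rw [hfr]
    have := hf.sub_int_mul_eq (x := x) ⌊x⌋
    simpa using this
  rw [← h1, h2, h3]

lemma fourierCoeff_liftIco {f : ℝ → ℂ} (hf : Function.Periodic f 1)
    (hc : Continuous f) (n : ℤ) :
    fourierCoeff (AddCircle.liftIco (1:ℝ) 0 f) n = fourierCoefP f n := by
  rw [fourierCoeff_eq_intervalIntegral (AddCircle.liftIco (1:ℝ) 0 f) n 0]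
  simp only [zero_add, one_div, smul_eq_mul]
  rw [inv_one, one_smul]
  unfold fourierCoefP
  apply intervalIntegral.integral_congr
  intro x _
  beta_reduce
  rw [liftIco_coe_of_periodic hf x]
  congr 1
  rw [fourier_coe_apply]
  congr 1
  push_cast
  ring

end PHTUC

open PHTUC

/-- **Unique continuation for the periodic Hilbert transform.** Let `s > 1/2`, let
`f ∈ H^s(𝕊¹)` be real valued and continuous (as a `1`-periodic function on `ℝ`), and let `g`
be the continuous representative of its periodic Hilbert transform `ℋf`. If `f` and `g` both
vanish on a nonempty open arc, corresponding to the interval `(a, b)`, then `f ≡ 0`. -/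
theorem periodic_hilbert_transform_unique_continuation
    (s : ℝ) (hs : 1 / 2 < s) (f g : ℝ → ℝ)
    (hf_per : Function.Periodic f 1) (hg_per : Function.Periodic g 1)
    (hf_cont : Continuous f) (hg_cont : Continuous g)
    (hfs : MemHsP s fun x => (f x : ℂ))
    (hfg : HasPeriodicHilbertTransform (fun x => (f x : ℂ)) fun x => (g x : ℂ))
    (a b : ℝ) (hab : a < b)
    (hvanish : ∀ x ∈ Set.Ioo a b, f x = 0 ∧ g x = 0) :
    ∀ x : ℝ, f x = 0 := by
  intro x
  set Fc : ℝ → ℂ := fun t => (f t : ℂ) + Complex.I * (g t : ℂ) with hFc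
  have hFper : Function.Periodic Fc 1 := fun t => by simp [hFc, hf_per t, hg_per t]
  have hFcont : Continuous Fc :=
    (Complex.continuous_ofReal.comp hf_cont).add
      (continuous_const.mul (Complex.continuous_ofReal.comp hg_cont))
  -- additivity of the Fourier coefficient
  have hint : ∀ (h : ℝ → ℝ), Continuous h → ∀ n : ℤ,
      IntervalIntegrable (fun x : ℝ => Complex.exp (-2*Real.pi*Complex.I*n*x) * (h x : ℂ))
        volume 0 1 := by
    intro h hc n
    apply Continuous.intervalIntegrable
    exact (Complex.continuous_exp.comp (by continuity)).mul
      (Complex.continuous_ofReal.comp hc)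
  have hcoef_add : ∀ n : ℤ, fourierCoefP Fc n
      = fourierCoefP (fun x => (f x:ℂ)) n + Complex.I * fourierCoefP (fun x => (g x:ℂ)) n := by
    intro n
    unfold fourierCoefP
    rw [← intervalIntegral.integral_const_mul]
    rw [← intervalIntegral.integral_add (hint f hf_cont n) ((hint g hg_cont n).const_mul _)]
    apply intervalIntegral.integral_congr
    intro t _
    beta_reduce
    ring
  set u : ℤ → ℂ := fourierCoefP (fun x => (f x:ℂ)) with hu
  have hcoef : ∀ n : ℤ, fourierCoefP Fc n = (1 + (Int.sign n : ℂ)) * u n := by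
    intro n
    rw [hcoef_add n, hfg n]
    have hII : Complex.I * (-Complex.I * (Int.sign n : ℂ) * u n)
        = (Int.sign n : ℂ) * u n := by
      rw [show Complex.I * (-Complex.I * (Int.sign n:ℂ) * u n)
          = -(Complex.I*Complex.I) * ((Int.sign n:ℂ) * u n) by ring, Complex.I_mul_I]
      ring
    rw [hII]; ring
  have hsgn_neg : ∀ n : ℤ, n < 0 → (Int.sign n : ℂ) = -1 := by
    intro n hn
    rw [Int.sign_eq_neg_one_iff_neg.mpr hn]
    push_cast
    ring
  have hneg : ∀ n : ℤ, n < 0 → fourierCoefP Fc n = 0 := by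
    intro n hn
    rw [hcoef n, hsgn_neg n hn]
    ring
  have hbnd : ∀ n : ℤ, ‖fourierCoefP Fc n‖ ≤ 2 * ‖u n‖ := by
    intro n
    rw [hcoef n, norm_mul]
    have h3 : Int.sign n = -1 ∨ Int.sign n = 0 ∨ Int.sign n = 1 := by
      rcases n with (_|n)|n <;> simp [Int.sign]
    have hle : ‖(1 + (Int.sign n : ℂ))‖ ≤ 2 := by
      rcases h3 with h|h|h <;> rw [h] <;> norm_num
    exact mul_le_mul_of_nonneg_right hle (norm_nonneg _)
  have hfs' : Summable fun n : ℤ => (1 + (n : ℝ) ^ 2) ^ s * ‖u n‖ ^ 2 := by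
    unfold MemHsP at hfs; exact hfs
  have hsum_u : Summable fun n : ℤ => ‖u n‖ := summable_norm_coef hs hfs'
  have hsumF : Summable fun n : ℤ => ‖fourierCoefP Fc n‖ :=
    Summable.of_nonneg_of_le (fun n => norm_nonneg _) hbnd (hsum_u.mul_left 2)
  -- lift to the circle
  have h01 : Fc 0 = Fc (0 + 1) := (hFper 0).symm
  set FF : C(AddCircle (1:ℝ), ℂ) :=
    ⟨AddCircle.liftIco (1:ℝ) 0 Fc, AddCircle.liftIco_continuous h01 hFcont.continuousOn⟩
    with hFF
  have hFFcoe : ∀ t : ℝ, FF ↑t = Fc t := fun t => liftIco_coe_of_periodic hFper t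
  have hFFcoeff : ∀ n : ℤ, fourierCoeff (⇑FF) n = fourierCoefP Fc n := fun n =>
    fourierCoeff_liftIco hFper hFcont n
  have hsumc : Summable (fourierCoeff (⇑FF)) := by
    apply Summable.of_norm
    simp_rw [hFFcoeff]
    exact hsumF
  set c : ℕ → ℂ := fun n => fourierCoeff (⇑FF) (n : ℤ) with hcdef
  have hcnorm : Summable fun n : ℕ => ‖c n‖ :=
    hsumc.norm.comp_injective (fun a b h => by simpa using h : Function.Injective (fun n : ℕ => (n:ℤ)))
  have hHS : ∀ t : ℝ, HasSum (fun n : ℕ => c n * eθ t ^ n) (Fc t) := by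
    intro t
    have h1 := has_pointwise_sum_fourier_series_of_summable hsumc ((t : ℝ) : AddCircle (1:ℝ))
    rw [hFFcoe t] at h1
    have hzero : ∀ m : ℤ, m ∉ Set.range (fun n : ℕ => (n:ℤ)) →
        fourierCoeff (⇑FF) m • fourier m ((t : ℝ) : AddCircle (1:ℝ)) = 0 := by
      intro m hm
      have hmneg : m < 0 := by
        by_contra hge
        push_neg at hge
        exact hm ⟨m.toNat, by simpa using Int.toNat_of_nonneg hge⟩
      rw [hFFcoeff, hneg m hmneg, zero_smul]
    have h2 := (Function.Injective.hasSum_iff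
      (f := fun m : ℤ => fourierCoeff (⇑FF) m • fourier m ((t : ℝ) : AddCircle (1:ℝ)))
      (g := fun n : ℕ => (n:ℤ)) (fun a b h => by simpa using h : Function.Injective (fun n : ℕ => (n:ℤ))) hzero).mpr h1
    have heq : (fun n : ℕ => (fun m : ℤ => fourierCoeff (⇑FF) m •
          fourier m ((t : ℝ) : AddCircle (1:ℝ))) ((fun n : ℕ => (n:ℤ)) n))
        = fun n : ℕ => c n * eθ t ^ n := by
      funext n
      beta_reduce
      rw [smul_eq_mul]
      congr 1
      rw [fourier_coe_apply, eθ, ← Complex.exp_nat_mul]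
      congr 1
      push_cast
      ring
    rw [← heq]
    exact h2
  have htsum : ∀ t : ℝ, (∑' n : ℕ, c n * eθ t ^ n) = Fc t := fun t => (hHS t).tsum_eq
  have hvan' : ∀ θ ∈ Set.Ioo a b, (∑' n : ℕ, c n * eθ θ ^ n) = 0 := by
    intro θ hθ
    rw [htsum θ]
    obtain ⟨h1, h2⟩ := hvanish θ hθ
    simp [hFc, h1, h2]
  have hFc0 : Fc x = 0 := by
    rw [← htsum x]
    exact core c hcnorm a b hab hvan' x
  have hre := congrArg Complex.re hFc0
  simpa [hFc] using hre

end
end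

section
/- Let δ > 0 and let g : ℝ → ℂ be a measurable function such that g is integrable and, for every y ∈ (0, 2δ), the function ξ ↦ g(ξ)·e^{-2πyξ} is integrable. Then the function F(z) = ∫_ℝ e^{2πizξ} g(ξ) dξ is continuous on the closed-below strip {z ∈ ℂ : 0 ≤ Im z < 2δ} and analytic (complex differentiable) on the open strip {z ∈ ℂ : 0 < Im z < 2δ}. -/
open MeasureTheory Complex Filter Topology

private lemma norm_cexp_aux (z : ℂ) (ξ : ℝ) :
    ‖Complex.exp (2 * Real.pi * Complex.I * z * ξ)‖ = Real.exp (-(2 * Real.pi * z.im * ξ)) := by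
  rw [Complex.norm_exp]
  congr 1
  simp [Complex.mul_re, Complex.mul_im]

private lemma exp_bound_aux {y y₁ y₂ : ℝ} (h1 : y₁ ≤ y) (h2 : y ≤ y₂) (ξ : ℝ) :
    Real.exp (-(2 * Real.pi * y * ξ)) ≤
      Real.exp (-(2 * Real.pi * y₁ * ξ)) + Real.exp (-(2 * Real.pi * y₂ * ξ)) := by
  rcases le_or_gt 0 ξ with hξ | hξ
  · have h : Real.exp (-(2 * Real.pi * y * ξ)) ≤ Real.exp (-(2 * Real.pi * y₁ * ξ)) := by
      apply Real.exp_le_exp.2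
      nlinarith [mul_nonneg (mul_nonneg Real.pi_pos.le (sub_nonneg.2 h1)) hξ]
    linarith [Real.exp_pos (-(2 * Real.pi * y₂ * ξ))]
  · have h : Real.exp (-(2 * Real.pi * y * ξ)) ≤ Real.exp (-(2 * Real.pi * y₂ * ξ)) := by
      apply Real.exp_le_exp.2
      nlinarith [mul_nonneg (mul_nonneg Real.pi_pos.le (sub_nonneg.2 h2)) (neg_nonneg.2 hξ.le)]
    linarith [Real.exp_pos (-(2 * Real.pi * y₁ * ξ))]

private lemma deriv_bound_aux {η y y₁ y₂ : ℝ} (hη : 0 < η) (h1 : y₁ ≤ y - η) (h2 : y + η ≤ y₂)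
    (ξ : ℝ) :
    2 * Real.pi * |ξ| * Real.exp (-(2 * Real.pi * y * ξ)) ≤
      η⁻¹ * (Real.exp (-(2 * Real.pi * y₁ * ξ)) + Real.exp (-(2 * Real.pi * y₂ * ξ))) := by
  have hπ := Real.pi_pos
  rcases le_or_gt 0 ξ with hξ | hξ
  · rw [_root_.abs_of_nonneg hξ]
    have key : 2 * Real.pi * ξ * η ≤ Real.exp (2 * Real.pi * η * ξ) := by
      nlinarith [Real.add_one_le_exp (2 * Real.pi * η * ξ)]
    have h3 : 2 * Real.pi * ξ ≤ η⁻¹ * Real.exp (2 * Real.pi * η * ξ) := by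
      rw [inv_mul_eq_div, le_div_iff₀ hη]; exact key
    have h4 : Real.exp (2 * Real.pi * η * ξ) * Real.exp (-(2 * Real.pi * y * ξ)) ≤
        Real.exp (-(2 * Real.pi * y₁ * ξ)) := by
      rw [← Real.exp_add]
      apply Real.exp_le_exp.2
      nlinarith [mul_nonneg (mul_nonneg Real.pi_pos.le (by linarith : (0:ℝ) ≤ y - η - y₁)) hξ]
    calc 2 * Real.pi * ξ * Real.exp (-(2 * Real.pi * y * ξ))
        ≤ (η⁻¹ * Real.exp (2 * Real.pi * η * ξ)) * Real.exp (-(2 * Real.pi * y * ξ)) :=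
          mul_le_mul_of_nonneg_right h3 (Real.exp_pos _).le
      _ = η⁻¹ * (Real.exp (2 * Real.pi * η * ξ) * Real.exp (-(2 * Real.pi * y * ξ))) := by ring
      _ ≤ η⁻¹ * Real.exp (-(2 * Real.pi * y₁ * ξ)) :=
          mul_le_mul_of_nonneg_left h4 (inv_nonneg.2 hη.le)
      _ ≤ η⁻¹ * (Real.exp (-(2 * Real.pi * y₁ * ξ)) + Real.exp (-(2 * Real.pi * y₂ * ξ))) := by
          have h5 := (Real.exp_pos (-(2 * Real.pi * y₂ * ξ))).le
          have h6 := inv_nonneg.2 hη.le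
          nlinarith
  · rw [abs_of_neg hξ]
    have key : 2 * Real.pi * (-ξ) * η ≤ Real.exp (2 * Real.pi * η * (-ξ)) := by
      nlinarith [Real.add_one_le_exp (2 * Real.pi * η * (-ξ))]
    have h3 : 2 * Real.pi * (-ξ) ≤ η⁻¹ * Real.exp (2 * Real.pi * η * (-ξ)) := by
      rw [inv_mul_eq_div, le_div_iff₀ hη]; exact key
    have h4 : Real.exp (2 * Real.pi * η * (-ξ)) * Real.exp (-(2 * Real.pi * y * ξ)) ≤
        Real.exp (-(2 * Real.pi * y₂ * ξ)) := by
      rw [← Real.exp_add]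
      apply Real.exp_le_exp.2
      nlinarith [mul_nonneg (mul_nonneg Real.pi_pos.le (by linarith : (0:ℝ) ≤ y₂ - y - η))
        (neg_nonneg.2 hξ.le)]
    calc 2 * Real.pi * (-ξ) * Real.exp (-(2 * Real.pi * y * ξ))
        ≤ (η⁻¹ * Real.exp (2 * Real.pi * η * (-ξ))) * Real.exp (-(2 * Real.pi * y * ξ)) :=
          mul_le_mul_of_nonneg_right h3 (Real.exp_pos _).le
      _ = η⁻¹ * (Real.exp (2 * Real.pi * η * (-ξ)) * Real.exp (-(2 * Real.pi * y * ξ))) := by ring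
      _ ≤ η⁻¹ * Real.exp (-(2 * Real.pi * y₂ * ξ)) :=
          mul_le_mul_of_nonneg_left h4 (inv_nonneg.2 hη.le)
      _ ≤ η⁻¹ * (Real.exp (-(2 * Real.pi * y₁ * ξ)) + Real.exp (-(2 * Real.pi * y₂ * ξ))) := by
          have h5 := (Real.exp_pos (-(2 * Real.pi * y₁ * ξ))).le
          have h6 := inv_nonneg.2 hη.le
          nlinarith

/-- **Analyticity of the Fourier–Laplace integral on a strip.** Let `δ > 0` and let
`g : ℝ → ℂ` be measurable and integrable, with `ξ ↦ g(ξ)e^{-2πyξ}` integrable for every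
`y ∈ (0, 2δ)`. Then `F(z) = ∫ e^{2πizξ} g(ξ) dξ` is continuous on the half-open strip
`{0 ≤ Im z < 2δ}` and analytic on the open strip `{0 < Im z < 2δ}`. -/
theorem fourier_laplace_continuous_and_analytic_on_strip
    (δ : ℝ) (hδ : 0 < δ) (g : ℝ → ℂ)
    (hg_meas : Measurable g) (hg_int : Integrable g)
    (hg_int' : ∀ y ∈ Set.Ioo (0 : ℝ) (2 * δ),
      Integrable fun ξ : ℝ => g ξ * (Real.exp (-(2 * Real.pi * y * ξ)) : ℂ)) :
    ContinuousOn (fun z : ℂ => ∫ ξ : ℝ, Complex.exp (2 * Real.pi * Complex.I * z * ξ) * g ξ)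
      {z : ℂ | 0 ≤ z.im ∧ z.im < 2 * δ} ∧
    DifferentiableOn ℂ (fun z : ℂ => ∫ ξ : ℝ, Complex.exp (2 * Real.pi * Complex.I * z * ξ) * g ξ)
      {z : ℂ | 0 < z.im ∧ z.im < 2 * δ} := by
  have hmeas : ∀ z : ℂ, AEStronglyMeasurable
      (fun ξ : ℝ => Complex.exp (2 * Real.pi * Complex.I * z * ξ) * g ξ) volume := fun z =>
    ((Complex.measurable_exp.comp (Complex.measurable_ofReal.const_mul
      (2 * Real.pi * Complex.I * z))).mul hg_meas).aestronglyMeasurable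
  have hnormF : ∀ (z : ℂ) (ξ : ℝ), ‖Complex.exp (2 * Real.pi * Complex.I * z * ξ) * g ξ‖ =
      Real.exp (-(2 * Real.pi * z.im * ξ)) * ‖g ξ‖ := fun z ξ => by
    rw [norm_mul, norm_cexp_aux]
  have hnormg : ∀ (y ξ : ℝ), ‖g ξ * (Real.exp (-(2 * Real.pi * y * ξ)) : ℂ)‖ =
      Real.exp (-(2 * Real.pi * y * ξ)) * ‖g ξ‖ := fun y ξ => by
    rw [norm_mul, Complex.norm_real, Real.norm_eq_abs,
      _root_.abs_of_nonneg (Real.exp_pos _).le, mul_comm]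
  constructor
  · -- Continuity on the half-open strip
    intro z₀ hz₀
    obtain ⟨hz₀0, hz₀2⟩ := hz₀
    set b : ℝ := (z₀.im + 2 * δ) / 2 with hb
    have hb0 : 0 < b := by simp only [hb]; linarith
    have hb2 : b < 2 * δ := by simp only [hb]; linarith
    have hz₀b : z₀.im < b := by simp only [hb]; linarith
    apply continuousWithinAt_of_dominated
      (bound := fun ξ => ‖g ξ‖ + Real.exp (-(2 * Real.pi * b * ξ)) * ‖g ξ‖)
    · exact Eventually.of_forall fun z => hmeas z
    · have hmem : {z : ℂ | z.im < b} ∈ 𝓝 z₀ :=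
        (isOpen_lt Complex.continuous_im continuous_const).mem_nhds hz₀b
      filter_upwards [nhdsWithin_le_nhds hmem, self_mem_nhdsWithin] with z hz1 hz2
      apply Eventually.of_forall
      intro ξ
      rw [hnormF]
      have hkey := exp_bound_aux (y₁ := 0) (y₂ := b) hz2.1 (le_of_lt hz1) ξ
      simp only [mul_zero, zero_mul, neg_zero, Real.exp_zero] at hkey
      have := mul_le_mul_of_nonneg_right hkey (norm_nonneg (g ξ))
      linarith [this]
    · exact hg_int.norm.add ((hg_int' b ⟨hb0, hb2⟩).norm.congr
        (Eventually.of_forall fun ξ => (hnormg b ξ)))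
    · apply Eventually.of_forall
      intro ξ
      apply Continuous.continuousWithinAt
      exact (Complex.continuous_exp.comp (by fun_prop)).mul continuous_const
  · -- Differentiability on the open strip
    intro z₀ hz₀
    obtain ⟨hy0, hy2⟩ := hz₀
    set y₀ : ℝ := z₀.im with hy₀
    set ε : ℝ := min y₀ (2 * δ - y₀) / 4 with hεdef
    have hεpos : 0 < ε := by
      have : 0 < min y₀ (2 * δ - y₀) := lt_min hy0 (by linarith)
      simp only [hεdef]; linarith
    have hε1 : ε ≤ y₀ / 4 := by
      simp only [hεdef]; have := min_le_left y₀ (2 * δ - y₀); linarith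
    have hε2 : ε ≤ (2 * δ - y₀) / 4 := by
      simp only [hεdef]; have := min_le_right y₀ (2 * δ - y₀); linarith
    set y₁ : ℝ := y₀ / 2 with hy₁def
    set y₂ : ℝ := y₀ + 2 * ε with hy₂def
    have hy₁mem : y₁ ∈ Set.Ioo (0 : ℝ) (2 * δ) := ⟨by simp only [hy₁def]; linarith,
      by simp only [hy₁def]; linarith⟩
    have hy₂mem : y₂ ∈ Set.Ioo (0 : ℝ) (2 * δ) := ⟨by simp only [hy₂def]; linarith,
      by simp only [hy₂def]; linarith⟩
    have him : ∀ z ∈ Metric.ball z₀ ε, y₁ ≤ z.im - ε ∧ z.im + ε ≤ y₂ := by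
      intro z hz
      rw [Metric.mem_ball, Complex.dist_eq] at hz
      have h1 : |z.im - z₀.im| < ε := by
        have := Complex.abs_im_le_norm (z - z₀)
        rw [Complex.sub_im] at this
        exact lt_of_le_of_lt this hz
      rw [abs_lt] at h1
      constructor
      · simp only [hy₁def]; linarith
      · simp only [hy₂def]; linarith
    have key := hasDerivAt_integral_of_dominated_loc_of_deriv_le (μ := volume)
      (F := fun z ξ => Complex.exp (2 * Real.pi * Complex.I * z * ξ) * g ξ)
      (F' := fun (z : ℂ) (ξ : ℝ) =>
        (2 * Real.pi * Complex.I * ξ) * Complex.exp (2 * Real.pi * Complex.I * z * ξ) * g ξ)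
      (x₀ := z₀)
      (bound := fun ξ => ε⁻¹ * ((Real.exp (-(2 * Real.pi * y₁ * ξ)) +
        Real.exp (-(2 * Real.pi * y₂ * ξ))) * ‖g ξ‖))
      (Metric.ball_mem_nhds z₀ hεpos) (Eventually.of_forall fun z => hmeas z)
      ?_ ?_ ?_ ?_ ?_
    · exact key.2.differentiableAt.differentiableWithinAt
    · -- Integrable (F z₀)
      apply Integrable.mono' ((hg_int' y₀ ⟨hy0, hy2⟩).norm) (hmeas z₀)
      apply Eventually.of_forall
      intro ξ
      rw [hnormF, hnormg]
    · -- AEStronglyMeasurable (F' z₀)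
      apply Measurable.aestronglyMeasurable
      exact ((Complex.measurable_ofReal.const_mul (2 * Real.pi * Complex.I)).mul
        (Complex.measurable_exp.comp (Complex.measurable_ofReal.const_mul
          (2 * Real.pi * Complex.I * z₀)))).mul hg_meas
    · -- bound on F'
      apply Eventually.of_forall
      intro ξ z hz
      obtain ⟨hz1, hz2⟩ := him z hz
      have hnorm : ‖(2 * Real.pi * Complex.I * ξ) *
          Complex.exp (2 * Real.pi * Complex.I * z * ξ) * g ξ‖ =
          (2 * Real.pi * |ξ| * Real.exp (-(2 * Real.pi * z.im * ξ))) * ‖g ξ‖ := by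
        rw [norm_mul, norm_mul, norm_cexp_aux]
        congr 2
        simp [map_mul]
        exact Or.inl Real.pi_pos.le
      rw [hnorm]
      have hd := deriv_bound_aux hεpos hz1 hz2 ξ
      calc (2 * Real.pi * |ξ| * Real.exp (-(2 * Real.pi * z.im * ξ))) * ‖g ξ‖
          ≤ (ε⁻¹ * (Real.exp (-(2 * Real.pi * y₁ * ξ)) +
              Real.exp (-(2 * Real.pi * y₂ * ξ)))) * ‖g ξ‖ :=
            mul_le_mul_of_nonneg_right hd (norm_nonneg _)
        _ = ε⁻¹ * ((Real.exp (-(2 * Real.pi * y₁ * ξ)) +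
              Real.exp (-(2 * Real.pi * y₂ * ξ))) * ‖g ξ‖) := by ring
    · -- bound integrable
      apply Integrable.const_mul
      have h1 := (hg_int' y₁ hy₁mem).norm.congr (Eventually.of_forall fun ξ => hnormg y₁ ξ)
      have h2 := (hg_int' y₂ hy₂mem).norm.congr (Eventually.of_forall fun ξ => hnormg y₂ ξ)
      exact (h1.add h2).congr (Eventually.of_forall fun ξ => by simp only [Pi.add_apply]; ring)
    · -- HasDerivAt
      apply Eventually.of_forall
      intro ξ z hz
      have h1 : HasDerivAt (fun w : ℂ => 2 * Real.pi * Complex.I * w * (ξ : ℂ))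
          (2 * Real.pi * Complex.I * ξ) z := by
        simpa using (((hasDerivAt_id z).const_mul (2 * Real.pi * Complex.I : ℂ)).mul_const (ξ : ℂ))
      have h2 := (h1.cexp).mul_const (g ξ)
      exact h2.congr_deriv (by ring)
end
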